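/- arXiv:2104.00637 — 6 statements merged into one kernel-verified Lean document; each statement's English description precedes it below -/
import Mathlib

section
/- Let Ω ⊆ ℝ^d be open, let u : Ω → ℝ be a convex C² function whose gradient map ∇u is injective on Ω, and let f, g : ℝ^d → ℝ be nonnegative measurable density functions with g(∇u(x)) > 0 for a.e. x ∈ Ω. If the map ∇u pushes the measure f·(Lebesgue restricted to Ω) forward to the measure g·Lebesgue, then for Lebesgue-almost every x ∈ Ω the Monge–Ampère equation holds: det D²u(x) = f(x) / g(∇u(x)), where D²u(x) is the Hessian matrix of u at x. -/
open MeasureTheory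
open scoped RealInnerProductSpace

lemma aux_det_nonneg {d : ℕ} (A : EuclideanSpace ℝ (Fin d) →ₗ[ℝ] EuclideanSpace ℝ (Fin d))
    (hsym : ∀ v w, ⟪A v, w⟫ = ⟪A w, v⟫) (hpos : ∀ v, 0 ≤ ⟪A v, v⟫) :
    0 ≤ LinearMap.det A := by
  classical
  set M : Matrix (Fin d) (Fin d) ℝ := Matrix.toEuclideanLin.symm A with hMdef
  have hAM : Matrix.toEuclideanLin M = A := by
    rw [hMdef]; exact (Matrix.toEuclideanLin).apply_symm_apply A
  have herm : M.IsHermitian := by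
    rw [Matrix.isHermitian_iff_isSymmetric]
    intro x y
    show ⟪Matrix.toEuclideanLin M x, y⟫ = ⟪x, Matrix.toEuclideanLin M y⟫
    rw [hAM, hsym x y]
    exact real_inner_comm _ _
  have hps : M.PosSemidef := by
    refine Matrix.posSemidef_iff_dotProduct_mulVec.2 ⟨herm, fun x => ?_⟩
    have h := hpos ((WithLp.equiv 2 (Fin d → ℝ)).symm x)
    have hx : A ((WithLp.equiv 2 (Fin d → ℝ)).symm x)
        = (WithLp.equiv 2 (Fin d → ℝ)).symm (M.mulVec x) := by
      rw [← hAM]; rfl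
    rw [hx] at h
    simpa [WithLp.equiv_symm_apply, EuclideanSpace.inner_toLp_toLp, dotProduct_comm] using h
  have hdet : LinearMap.det A = M.det := by
    rw [← hAM]
    have hrepr : Matrix.toEuclideanLin (𝕜 := ℝ) (m := Fin d) (n := Fin d) M =
        ((WithLp.linearEquiv 2 ℝ (Fin d → ℝ)).symm :
            (Fin d → ℝ) ≃ₗ[ℝ] EuclideanSpace ℝ (Fin d)).toLinearMap
          ∘ₗ Matrix.toLin' M
          ∘ₗ ((WithLp.linearEquiv 2 ℝ (Fin d → ℝ)) :
            EuclideanSpace ℝ (Fin d) ≃ₗ[ℝ] (Fin d → ℝ)).toLinearMap := rfl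
    rw [hrepr]
    rw [show ((WithLp.linearEquiv 2 ℝ (Fin d → ℝ)) :
        EuclideanSpace ℝ (Fin d) ≃ₗ[ℝ] (Fin d → ℝ)).toLinearMap
        = (((WithLp.linearEquiv 2 ℝ (Fin d → ℝ)).symm).symm :
          EuclideanSpace ℝ (Fin d) ≃ₗ[ℝ] (Fin d → ℝ)).toLinearMap from rfl]
    rw [LinearMap.det_conj (Matrix.toLin' M) (WithLp.linearEquiv 2 ℝ (Fin d → ℝ)).symm]
    exact LinearMap.det_toLin' M
  rw [hdet, herm.det_eq_prod_eigenvalues]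
  have := fun i => hps.eigenvalues_nonneg i
  exact Finset.prod_nonneg fun i _ => by simpa using this i

theorem stmt_5 {d : ℕ} (Ω : Set (EuclideanSpace ℝ (Fin d)))
    (hΩ : IsOpen Ω)
    (u : EuclideanSpace ℝ (Fin d) → ℝ)
    (hconv : ConvexOn ℝ Ω u)
    (hC2 : ContDiffOn ℝ 2 u Ω)
    (hinj : Set.InjOn (gradient u) Ω)
    (f g : EuclideanSpace ℝ (Fin d) → ℝ)
    (hfm : Measurable f) (hgm : Measurable g)
    (hf0 : ∀ x, 0 ≤ f x) (hg0 : ∀ y, 0 ≤ g y)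
    (hgpos : ∀ᵐ x ∂(volume.restrict Ω), 0 < g (gradient u x))
    (hpush : Measure.map (gradient u)
        ((volume.restrict Ω).withDensity (fun x => ENNReal.ofReal (f x))) =
      volume.withDensity (fun y => ENNReal.ofReal (g y))) :
    ∀ᵐ x ∂(volume.restrict Ω),
      LinearMap.det (fderiv ℝ (gradient u) x).toLinearMap = f x / g (gradient u x) := by
  classical
  set T := gradient u with hTdef
  have hTeq : T = fun y => (InnerProductSpace.toDual ℝ _).symm (fderiv ℝ u y) := rfl
  have hfd1 : ContDiffOn ℝ 1 (fderiv ℝ u) Ω := hC2.fderiv_of_isOpen hΩ (by norm_num)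
  have hT1 : ContDiffOn ℝ 1 T Ω := by
    rw [hTeq]
    exact ((InnerProductSpace.toDual ℝ _).symm.contDiff).comp_contDiffOn hfd1
  have hTcont : ContinuousOn T Ω := hT1.continuousOn
  have hTdiff : ∀ x ∈ Ω, HasFDerivAt T (fderiv ℝ T x) x := fun x hx =>
    ((hT1.differentiableOn (by norm_num)).differentiableAt (hΩ.mem_nhds hx)).hasFDerivAt
  have hudiff : ∀ x ∈ Ω, HasFDerivAt u (fderiv ℝ u x) x := fun x hx =>
    ((hC2.differentiableOn (by norm_num)).differentiableAt (hΩ.mem_nhds hx)).hasFDerivAt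
  -- nonnegativity of the Jacobian determinant on Ω
  have hdet_nonneg : ∀ x ∈ Ω, 0 ≤ LinearMap.det (fderiv ℝ T x).toLinearMap := by
    intro x hx
    set A := fderiv ℝ T x with hA
    set B := fderiv ℝ (fderiv ℝ u) x with hB
    have hfd_at : HasFDerivAt (fderiv ℝ u) B x :=
      ((hfd1.differentiableOn (by norm_num)).differentiableAt (hΩ.mem_nhds hx)).hasFDerivAt
    have hBsym : ∀ v w, B v w = B w v := by
      refine second_derivative_symmetric_of_eventually (f := u) ?_ hfd_at
      filter_upwards [hΩ.mem_nhds hx] with y hy using hudiff y hy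
    have hApply : ∀ w v, ⟪A v, w⟫ = B v w := by
      intro w
      have h1 : HasFDerivAt (fun y => (innerSL ℝ w) (T y)) ((innerSL ℝ w).comp A) x :=
        ((innerSL ℝ w).hasFDerivAt).comp x (hTdiff x hx)
      have heq : (fun y => (innerSL ℝ w) (T y)) = fun y => fderiv ℝ u y w := by
        funext y
        show ⟪w, T y⟫ = fderiv ℝ u y w
        rw [real_inner_comm]
        exact InnerProductSpace.toDual_symm_apply
      rw [heq] at h1
      have h2 : HasFDerivAt (fun y => fderiv ℝ u y w)
          ((ContinuousLinearMap.apply ℝ ℝ w).comp B) x :=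
        ((ContinuousLinearMap.apply ℝ ℝ w).hasFDerivAt).comp x hfd_at
      have h3 := h1.unique h2
      intro v
      have h4 := congrFun (congrArg (fun (C : _ →L[ℝ] ℝ) => (C : _ → ℝ)) h3) v
      simp only [ContinuousLinearMap.comp_apply, ContinuousLinearMap.apply_apply] at h4
      rw [← real_inner_comm (A v) w]
      exact h4
    have hsym : ∀ v w, ⟪A v, w⟫ = ⟪A w, v⟫ := by
      intro v w
      rw [hApply w v, hApply v w]
      exact hBsym v w
    have hpos : ∀ v, 0 ≤ ⟪A v, v⟫ := by
      intro v
      obtain ⟨ε, εpos, hball⟩ := Metric.isOpen_iff.1 hΩ x hx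
      set δ := ε / (‖v‖ + 1) with hδ
      have hδpos : 0 < δ := div_pos εpos (by positivity)
      have hδv : δ * ‖v‖ < ε := by
        rw [hδ, div_mul_eq_mul_div, div_lt_iff₀ (by positivity)]
        nlinarith [norm_nonneg v, εpos]
      set L : ℝ → EuclideanSpace ℝ (Fin d) := fun t => x + t • v with hL
      have hLmem : ∀ t ∈ Set.Ioo (-δ) δ, L t ∈ Ω := by
        intro t ht
        apply hball
        have hdist : dist (L t) x = |t| * ‖v‖ := by
          rw [hL]; simp [dist_eq_norm, norm_smul, Real.norm_eq_abs]
        rw [Metric.mem_ball, hdist]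
        have h1 : |t| ≤ δ := (abs_lt.2 ⟨ht.1, ht.2⟩).le
        calc |t| * ‖v‖ ≤ δ * ‖v‖ := mul_le_mul_of_nonneg_right h1 (norm_nonneg v)
          _ < ε := hδv
      -- convexity of the restriction to the segment
      set g0 : ℝ →ᵃ[ℝ] EuclideanSpace ℝ (Fin d) := AffineMap.lineMap x (x + v) with hg0def
      have hg0 : ∀ t, g0 t = L t := by
        intro t
        rw [hg0def, hL]
        simp [AffineMap.lineMap_apply]
        module
      have hφconv : ConvexOn ℝ (Set.Ioo (-δ) δ) (u ∘ L) := by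
        have h1 : ConvexOn ℝ (g0 ⁻¹' Ω) (u ∘ g0) := hconv.comp_affineMap g0
        have h2 : ConvexOn ℝ (Set.Ioo (-δ) δ) (u ∘ g0) :=
          h1.subset (fun t ht => by rw [Set.mem_preimage, hg0]; exact hLmem t ht)
            (convex_Ioo _ _)
        have : u ∘ g0 = u ∘ L := funext fun t => by
          simp only [Function.comp_apply, hg0 t]
        rwa [this] at h2
      have hLd : ∀ t : ℝ, HasDerivAt L v t := by
        intro t
        have h1 : HasDerivAt (fun s : ℝ => s • v) ((1 : ℝ) • v) t :=
          (hasDerivAt_id t).smul_const v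
        simpa [hL] using h1.const_add x
      have hφd : ∀ t ∈ Set.Ioo (-δ) δ, HasDerivAt (u ∘ L) ⟪T (L t), v⟫ t := by
        intro t ht
        have h1 : HasFDerivAt u (fderiv ℝ u (L t)) (L t) := hudiff _ (hLmem t ht)
        have h2 := h1.comp_hasDerivAt t (hLd t)
        have h3 : ⟪T (L t), v⟫ = fderiv ℝ u (L t) v :=
          InnerProductSpace.toDual_symm_apply
        rw [h3]
        exact h2
      have hmono : MonotoneOn (fun t => ⟪T (L t), v⟫) (Set.Ioo (-δ) δ) := by
        have hd := hφconv.monotoneOn_deriv (fun t ht => (hφd t ht).differentiableAt)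
        intro s hs t ht hst
        have e1 : deriv (u ∘ L) s = ⟪T (L s), v⟫ := (hφd s hs).deriv
        have e2 : deriv (u ∘ L) t = ⟪T (L t), v⟫ := (hφd t ht).deriv
        simp only []
        rw [← e1, ← e2]
        exact hd hs ht hst
      have hTd : HasDerivAt (fun t => T (L t)) (A v) 0 := by
        have hL0 : L 0 = x := by rw [hL]; simp
        have h1 : HasFDerivAt T A (L 0) := by rw [hL0, hA]; exact hTdiff x hx
        exact h1.comp_hasDerivAt 0 (hLd 0)
      have hψd : HasDerivAt (fun t => ⟪T (L t), v⟫) ⟪A v, v⟫ 0 := by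
        have h1 := hTd.inner ℝ (hasDerivAt_const (0 : ℝ) v)
        simpa using h1
      have h0mem : (0 : ℝ) ∈ Set.Ioo (-δ) δ := ⟨by linarith, hδpos⟩
      have hslope := hasDerivAt_iff_tendsto_slope.1 hψd
      have hslope' : Filter.Tendsto (slope (fun t => ⟪T (L t), v⟫) 0)
          (nhdsWithin 0 (Set.Ioi 0)) (nhds ⟪A v, v⟫) :=
        hslope.mono_left (nhdsWithin_mono _ (fun t (ht : (0:ℝ) < t) =>
          (by exact ne_of_gt ht : t ≠ 0)))
      refine ge_of_tendsto hslope' ?_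
      filter_upwards [Ioo_mem_nhdsGT_of_mem ⟨le_refl (0:ℝ), hδpos⟩] with t ht
      have htS : t ∈ Set.Ioo (-δ) δ := ⟨by linarith [ht.1], ht.2⟩
      have hmono' := hmono h0mem htS ht.1.le
      rw [slope_def_field]
      apply div_nonneg (sub_nonneg.2 hmono')
      simpa using ht.1.le
    exact aux_det_nonneg (fderiv ℝ T x).toLinearMap hsym hpos
  -- measure-theoretic part
  have hΩm := hΩ.measurableSet
  have hTmeas : AEMeasurable T (volume.restrict Ω) := hTcont.aemeasurable hΩm
  have hTν : AEMeasurable T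
      ((volume.restrict Ω).withDensity (fun x => ENNReal.ofReal (f x))) :=
    hTmeas.mono' (withDensity_absolutelyContinuous _ _)
  have key : ∀ A : Set (EuclideanSpace ℝ (Fin d)), MeasurableSet A → A ⊆ Ω →
      ∫⁻ x in A, ENNReal.ofReal |(fderiv ℝ T x).det| * ENNReal.ofReal (g (T x)) ∂volume
        = ∫⁻ x in A, ENNReal.ofReal (f x) ∂volume := by
    intro A hAm hAΩ
    have hder : ∀ x ∈ A, HasFDerivWithinAt T (fderiv ℝ T x) A x :=
      fun x hx => (hTdiff x (hAΩ hx)).hasFDerivWithinAt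
    have hinjA : Set.InjOn T A := hinj.mono hAΩ
    have himg : MeasurableSet (T '' A) :=
      hAm.image_of_continuousOn_injOn (hTcont.mono hAΩ) hinjA
    rw [← lintegral_image_eq_lintegral_abs_det_fderiv_mul volume hAm hder hinjA
        (fun y => ENNReal.ofReal (g y))]
    have h2 : ∫⁻ y in T '' A, ENNReal.ofReal (g y) ∂volume
        = (volume.withDensity fun y => ENNReal.ofReal (g y)) (T '' A) :=
      (withDensity_apply _ himg).symm
    rw [h2, ← hpush, Measure.map_apply_of_aemeasurable hTν himg]
    have hpre : T ⁻¹' (T '' A) ∩ Ω = A := by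
      apply Set.Subset.antisymm
      · rintro x ⟨hx1, hx2⟩
        obtain ⟨a, haA, ha⟩ := hx1
        rwa [← hinj (hAΩ haA) hx2 ha]
      · intro x hx; exact ⟨Set.mem_image_of_mem _ hx, hAΩ hx⟩
    rw [← restrict_withDensity hΩm, Measure.restrict_apply' hΩm, hpre,
      withDensity_apply _ hAm]
  have hfun_meas : AEMeasurable
      (fun x => ENNReal.ofReal |(fderiv ℝ T x).det| * ENNReal.ofReal (g (T x)))
      (volume.restrict Ω) := by
    refine AEMeasurable.fun_mul ?_ ?_
    · exact ((((ContinuousLinearMap.continuous_det).measurable).comp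
        (measurable_fderiv ℝ T)).abs.ennreal_ofReal).aemeasurable
    · exact (hgm.comp_aemeasurable hTmeas).ennreal_ofReal
  have hae : (fun x => ENNReal.ofReal |(fderiv ℝ T x).det| * ENNReal.ofReal (g (T x)))
      =ᵐ[volume.restrict Ω] fun x => ENNReal.ofReal (f x) := by
    refine ae_eq_of_forall_setLIntegral_eq_of_sigmaFinite₀ hfun_meas
      hfm.ennreal_ofReal.aemeasurable ?_
    intro s hs _
    rw [Measure.restrict_restrict hs]
    exact key (s ∩ Ω) (hs.inter hΩm) Set.inter_subset_right
  filter_upwards [hae, hgpos, ae_restrict_mem hΩm] with x hx hgx hxΩ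
  have habs : |(fderiv ℝ T x).det| * g (T x) = f x := by
    rw [← ENNReal.ofReal_mul (abs_nonneg _)] at hx
    exact (ENNReal.ofReal_eq_ofReal_iff
      (mul_nonneg (abs_nonneg _) (hg0 _)) (hf0 x)).1 hx
  have hdet := hdet_nonneg x hxΩ
  have hdd : (fderiv ℝ T x).det = LinearMap.det (fderiv ℝ T x).toLinearMap := rfl
  rw [hdd] at habs
  rw [abs_of_nonneg hdet] at habs
  rw [eq_div_iff (ne_of_gt hgx)]
  exact habs
end

section
/- Optimality of the farthest power diagram map for the inner-product cost: let μ be a finite Borel measure on ℝ^d with finite first moment, let p₁, …, pₙ ∈ ℝ^d be pairwise distinct, ν₁, …, νₙ > 0, and suppose h ∈ ℝⁿ satisfies μ(Wᵢ(h)) = νᵢ for all i (where Wᵢ(h) is the farthest power cell) and the pairwise intersections Wᵢ(h) ∩ Wⱼ(h), i ≠ j, are μ-null. Let T_h : ℝ^d → ℝ^d be any measurable map with T_h(x) = pᵢ for all x in Wᵢ(h) ∖ ⋃_{j ≠ i} Wⱼ(h). Then for every measurable map T taking values in {p₁, …, pₙ} with μ(T⁻¹{pᵢ}) = νᵢ for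 all i, we have ∫ ⟪x, T_h(x)⟫ dμ(x) ≤ ∫ ⟪x, T(x)⟫ dμ(x). -/
open MeasureTheory
open scoped RealInnerProductSpace

/-- The farthest power cell of index `i` for points `p` and heights `h`. -/
def farCell {d n : ℕ} (p : Fin n → EuclideanSpace ℝ (Fin d)) (h : Fin n → ℝ) (i : Fin n) :
    Set (EuclideanSpace ℝ (Fin d)) :=
  {x | ∀ j, ⟪p i, x⟫ + h i ≤ ⟪p j, x⟫ + h j}

theorem stmt_11 {d n : ℕ}
    (μ : Measure (EuclideanSpace ℝ (Fin d))) [IsFiniteMeasure μ]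
    (hμ1 : Integrable (fun x => ‖x‖) μ)
    (p : Fin n → EuclideanSpace ℝ (Fin d)) (hp : Function.Injective p)
    (ν : Fin n → ℝ) (hν : ∀ i, 0 < ν i)
    (h : Fin n → ℝ)
    (hvol : ∀ i, μ (farCell p h i) = ENNReal.ofReal (ν i))
    (hnull : ∀ i j, i ≠ j → μ (farCell p h i ∩ farCell p h j) = 0)
    (Th : EuclideanSpace ℝ (Fin d) → EuclideanSpace ℝ (Fin d))
    (hThm : Measurable Th)
    (hTh : ∀ i, ∀ x ∈ farCell p h i \ ⋃ j ∈ ({i}ᶜ : Set (Fin n)), farCell p h j, Th x = p i) :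
    ∀ T : EuclideanSpace ℝ (Fin d) → EuclideanSpace ℝ (Fin d),
      Measurable T → (∀ x, ∃ i, T x = p i) →
      (∀ i, μ (T ⁻¹' {p i}) = ENNReal.ofReal (ν i)) →
      ∫ x, ⟪x, Th x⟫ ∂μ ≤ ∫ x, ⟪x, T x⟫ ∂μ := by
  classical
  intro T hTm hTr hTmass
  obtain ⟨i₀, -⟩ := hTr 0
  haveI : Nonempty (Fin n) := ⟨i₀⟩
  set W := farCell p h with hWdef
  -- measurability of cells
  have hWm : ∀ i, MeasurableSet (W i) := by
    intro i
    have : W i = ⋂ j, {x | ⟪p i, x⟫ + h i ≤ ⟪p j, x⟫ + h j} := by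
      ext x; simp [hWdef, farCell, Set.mem_iInter]
    rw [this]
    refine MeasurableSet.iInter fun j => measurableSet_le ?_ ?_ <;>
      exact ((Continuous.inner continuous_const continuous_id).add continuous_const).measurable
  have hTpm : ∀ i, MeasurableSet (T ⁻¹' {p i}) := fun i => hTm (measurableSet_singleton _)
  -- every point is in some cell
  have hcover : ∀ x, ∃ i, x ∈ W i := by
    intro x
    obtain ⟨i, hi⟩ := Finite.exists_min (fun j => ⟪p j, x⟫ + h j)
    exact ⟨i, hi⟩
  -- the null set of overlaps
  set N : Set (EuclideanSpace ℝ (Fin d)) := ⋃ i, ⋃ j, ⋃ _ : i ≠ j, W i ∩ W j with hNdef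
  have hNnull : μ N = 0 :=
    measure_iUnion_null fun i => measure_iUnion_null fun j =>
      measure_iUnion_null fun hij => hnull i j hij
  have hae : ∀ᵐ x ∂μ, x ∉ N := by
    rw [ae_iff]
    simpa using hNnull
  -- the η functions
  set ηh : EuclideanSpace ℝ (Fin d) → ℝ :=
    fun x => ∑ i, (W i).indicator (fun _ => h i) x with hηh_def
  set ηT : EuclideanSpace ℝ (Fin d) → ℝ :=
    fun x => ∑ i, (T ⁻¹' {p i}).indicator (fun _ => h i) x with hηT_def
  have int_ind : ∀ (s : Set (EuclideanSpace ℝ (Fin d))), MeasurableSet s → ∀ c : ℝ,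
      Integrable (s.indicator (fun _ => c)) μ :=
    fun s hs c => (integrable_const c).indicator hs
  have intηh : Integrable ηh μ :=
    integrable_finset_sum _ fun i _ => int_ind _ (hWm i) _
  have intηT : Integrable ηT μ :=
    integrable_finset_sum _ fun i _ => int_ind _ (hTpm i) _
  have Iηh : ∫ x, ηh x ∂μ = ∑ i, (ν i) * h i := by
    rw [hηh_def, integral_finset_sum _ fun i _ => int_ind _ (hWm i) _]
    refine Finset.sum_congr rfl fun i _ => ?_
    rw [integral_indicator_const _ (hWm i)]
    rw [measureReal_def, hvol i, ENNReal.toReal_ofReal (hν i).le, smul_eq_mul]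
  have IηT : ∫ x, ηT x ∂μ = ∑ i, (ν i) * h i := by
    rw [hηT_def, integral_finset_sum _ fun i _ => int_ind _ (hTpm i) _]
    refine Finset.sum_congr rfl fun i _ => ?_
    rw [integral_indicator_const _ (hTpm i)]
    rw [measureReal_def, hTmass i, ENNReal.toReal_ofReal (hν i).le, smul_eq_mul]
  -- integrability of the inner product functions
  set M : ℝ := ∑ i, ‖p i‖ with hMdef
  have hM : ∀ j, ‖p j‖ ≤ M :=
    fun j => Finset.single_le_sum (f := fun i => ‖p i‖)
      (fun i _ => norm_nonneg _) (Finset.mem_univ j)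
  have intT : Integrable (fun x => ⟪x, T x⟫) μ := by
    refine (hμ1.const_mul M).mono'
      (measurable_id.inner hTm).aestronglyMeasurable (ae_of_all _ fun x => ?_)
    obtain ⟨j, hj⟩ := hTr x
    calc ‖⟪x, T x⟫‖ ≤ ‖x‖ * ‖T x‖ := norm_inner_le_norm _ _
      _ ≤ ‖x‖ * M := by
          rw [hj]; exact mul_le_mul_of_nonneg_left (hM j) (norm_nonneg x)
      _ = M * ‖x‖ := mul_comm _ _
  -- a.e. description of Th, ηh, ηT
  have hgood : ∀ x, x ∉ N → ∃ i, Th x = p i ∧ ηh x = h i := by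
    intro x hx
    obtain ⟨i, hi⟩ := hcover x
    have huniq : ∀ j, j ≠ i → x ∉ W j := by
      intro j hj hxj
      exact hx (Set.mem_iUnion.2 ⟨i, Set.mem_iUnion.2 ⟨j,
        Set.mem_iUnion.2 ⟨Ne.symm hj, ⟨hi, hxj⟩⟩⟩⟩)
    refine ⟨i, ?_, ?_⟩
    · apply hTh i x
      refine ⟨hi, ?_⟩
      simp only [Set.mem_iUnion, not_exists]
      intro j hj
      exact huniq j (by simpa using hj)
    · have hrfl : ηh x = ∑ k, (W k).indicator (fun _ => h k) x := rfl
      rw [hrfl, Finset.sum_eq_single i]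
      · exact Set.indicator_of_mem hi _
      · intro k _ hk
        exact Set.indicator_of_notMem (huniq k hk) _
      · intro hk; exact absurd (Finset.mem_univ i) hk
  have intTh : Integrable (fun x => ⟪x, Th x⟫) μ := by
    refine (hμ1.const_mul M).mono'
      (measurable_id.inner hThm).aestronglyMeasurable ?_
    filter_upwards [hae] with x hx
    obtain ⟨i, hThx, -⟩ := hgood x hx
    calc ‖⟪x, Th x⟫‖ ≤ ‖x‖ * ‖Th x‖ := norm_inner_le_norm _ _
      _ ≤ ‖x‖ * M := by
          rw [hThx]; exact mul_le_mul_of_nonneg_left (hM i) (norm_nonneg x)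
      _ = M * ‖x‖ := mul_comm _ _
  -- the key pointwise a.e. inequality
  have hptwise : (fun x => ⟪x, Th x⟫ + ηh x) ≤ᵐ[μ] fun x => ⟪x, T x⟫ + ηT x := by
    filter_upwards [hae] with x hx
    obtain ⟨i, hThx, hηhx⟩ := hgood x hx
    obtain ⟨j, hTx⟩ := hTr x
    have hηTx : ηT x = h j := by
      have hrfl : ηT x = ∑ k, (T ⁻¹' {p k}).indicator (fun _ => h k) x := rfl
      rw [hrfl, Finset.sum_eq_single j]
      · exact Set.indicator_of_mem (by simp [hTx]) _
      · intro k _ hk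
        refine Set.indicator_of_notMem ?_ _
        simp only [Set.mem_preimage, Set.mem_singleton_iff, hTx]
        exact fun hc => hk (hp hc).symm
      · intro hk; exact absurd (Finset.mem_univ j) hk
    obtain ⟨iW, hiW⟩ := hcover x
    have hxi : x ∈ W i := by
      by_contra hxi
      -- Th x = p i came from x ∈ W i; reprove membership
      obtain ⟨i', hi'⟩ := hcover x
      have : Th x = p i' := by
        apply hTh i' x
        refine ⟨hi', ?_⟩
        simp only [Set.mem_iUnion, not_exists]
        intro j' hj'
        intro hxj'
        have hne : j' ≠ i' := by simpa using hj'
        exact hx (Set.mem_iUnion.2 ⟨i', Set.mem_iUnion.2 ⟨j',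
          Set.mem_iUnion.2 ⟨Ne.symm hne, ⟨hi', hxj'⟩⟩⟩⟩)
      have : p i = p i' := by rw [← hThx, this]
      rw [hp this] at hxi
      exact hxi hi'
    have hkey : ⟪p i, x⟫ + h i ≤ ⟪p j, x⟫ + h j := hxi j
    simp only [hThx, hTx, hηhx, hηTx]
    have e1 : ⟪x, p i⟫ = ⟪p i, x⟫ := real_inner_comm _ _
    have e2 : ⟪x, p j⟫ = ⟪p j, x⟫ := real_inner_comm _ _
    linarith
  have key := integral_mono_ae (intTh.add intηh) (intT.add intηT) hptwise
  simp only [Pi.add_apply] at key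
  rw [integral_add intTh intηh, integral_add intT intηT, Iηh, IηT] at key
  linarith
end

section
/- Semi-discrete worst transportation optimality (quadratic cost): let μ be a finite Borel measure on ℝ^d with finite second moment, let p₁, …, pₙ ∈ ℝ^d be pairwise distinct, ν₁, …, νₙ > 0 with Σᵢνᵢ = μ(ℝ^d), and suppose h ∈ ℝⁿ satisfies μ(Wᵢ(h)) = νᵢ for all i (Wᵢ(h) the farthest power cells) and the pairwise intersections Wᵢ(h) ∩ Wⱼ(h), i ≠ j, are μ-null. Let T_h be any measurable map with T_h(x) = pᵢ for all x in Wᵢ(h) ∖ ⋃_{j≠i} Wⱼ(h). Then for every measurable map T taking values in {p₁, …, pₙ} with μ(T⁻¹{pᵢ}) = νᵢ for all i, we have ∫ ‖x − T_h(x)‖² dμ(x) ≥ ∫ ‖x − T(x)‖² dμ(x); i.e., T_h maximizes the quadratic transportation cost among all measure-preserving maps from μ to Σᵢ νᵢ δ_{pᵢ}. -/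
open MeasureTheory
open scoped RealInnerProductSpace

theorem stmt_12 {d n : ℕ}
    (μ : Measure (EuclideanSpace ℝ (Fin d))) [IsFiniteMeasure μ]
    (hμ2 : Integrable (fun x => ‖x‖ ^ 2) μ)
    (p : Fin n → EuclideanSpace ℝ (Fin d)) (hp : Function.Injective p)
    (ν : Fin n → ℝ) (hν : ∀ i, 0 < ν i)
    (hmass : ∑ i, ν i = (μ Set.univ).toReal)
    (h : Fin n → ℝ)
    (hvol : ∀ i, μ (farCell p h i) = ENNReal.ofReal (ν i))
    (hnull : ∀ i j, i ≠ j → μ (farCell p h i ∩ farCell p h j) = 0)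
    (Th : EuclideanSpace ℝ (Fin d) → EuclideanSpace ℝ (Fin d))
    (hThm : Measurable Th)
    (hTh : ∀ i, ∀ x ∈ farCell p h i \ ⋃ j ∈ ({i}ᶜ : Set (Fin n)), farCell p h j, Th x = p i) :
    ∀ T : EuclideanSpace ℝ (Fin d) → EuclideanSpace ℝ (Fin d),
      Measurable T → (∀ x, ∃ i, T x = p i) →
      (∀ i, μ (T ⁻¹' {p i}) = ENNReal.ofReal (ν i)) →
      ∫ x, ‖x - T x‖ ^ 2 ∂μ ≤ ∫ x, ‖x - Th x‖ ^ 2 ∂μ := by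
  intro T hTm hTval hTmeas
  rcases Nat.eq_zero_or_pos n with hn | hn
  · subst hn
    have h1 : (μ Set.univ).toReal = 0 := by simpa using hmass.symm
    have h2 : μ Set.univ = 0 :=
      ((ENNReal.toReal_eq_zero_iff _).mp h1).resolve_right (measure_ne_top μ Set.univ)
    have hμ0 : μ = 0 := Measure.measure_univ_eq_zero.mp h2
    simp [hμ0]
  -- cells
  set W : Fin n → Set (EuclideanSpace ℝ (Fin d)) := farCell p h with hWdef
  have hWmeas : ∀ i, MeasurableSet (W i) := by
    intro i
    have hcl : IsClosed (W i) := by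
      have : W i = ⋂ j, {x | ⟪p i, x⟫ + h i ≤ ⟪p j, x⟫ + h j} := by
        ext x; simp [hWdef, farCell, Set.mem_iInter]
      rw [this]
      exact isClosed_iInter fun j =>
        isClosed_le ((continuous_const.inner continuous_id).add continuous_const)
          ((continuous_const.inner continuous_id).add continuous_const)
    exact hcl.measurableSet
  set G : Fin n → Set (EuclideanSpace ℝ (Fin d)) :=
    fun i => W i \ ⋃ j ∈ ({i}ᶜ : Set (Fin n)), W j with hGdef
  have hGmeas : ∀ i, MeasurableSet (G i) :=
    fun i => (hWmeas i).diff (MeasurableSet.biUnion (Set.to_countable _) fun j _ => hWmeas j)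
  have hinter : ∀ i, μ (W i ∩ ⋃ j ∈ ({i}ᶜ : Set (Fin n)), W j) = 0 := by
    intro i
    have hsub : W i ∩ ⋃ j ∈ ({i}ᶜ : Set (Fin n)), W j ⊆
        ⋃ j ∈ ({i}ᶜ : Set (Fin n)), (W i ∩ W j) := by
      rw [Set.inter_iUnion₂]
    refine measure_mono_null hsub ?_
    refine (measure_biUnion_null_iff (Set.to_countable _)).mpr ?_
    intro j hj
    exact hnull i j (Ne.symm hj)
  have hGvol : ∀ i, μ (G i) = ENNReal.ofReal (ν i) := by
    intro i
    rw [hGdef]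
    simpa using (measure_diff_null' (hinter i)).trans (hvol i)
  -- a.e. every point lies in exactly one G i and Th sends it to p i
  have haeN : μ (⋃ i, (W i ∩ ⋃ j ∈ ({i}ᶜ : Set (Fin n)), W j)) = 0 :=
    measure_iUnion_null fun i => hinter i
  have hae : ∀ᵐ x ∂μ, ∃ i, x ∈ G i ∧ Th x = p i := by
    have hcompl : ∀ᵐ x ∂μ, x ∉ ⋃ i, (W i ∩ ⋃ j ∈ ({i}ᶜ : Set (Fin n)), W j) :=
      (measure_eq_zero_iff_ae_notMem.mp haeN)
    filter_upwards [hcompl] with x hx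
    obtain ⟨i, -, hi⟩ := Finset.exists_min_image Finset.univ
      (fun j => ⟪p j, x⟫ + h j) ⟨⟨0, hn⟩, Finset.mem_univ _⟩
    have hxW : x ∈ W i := fun j => hi j (Finset.mem_univ j)
    have hxn : x ∉ ⋃ j ∈ ({i}ᶜ : Set (Fin n)), W j := by
      intro hmem
      exact hx (Set.mem_iUnion.mpr ⟨i, ⟨hxW, hmem⟩⟩)
    exact ⟨i, ⟨hxW, hxn⟩, hTh i x ⟨hxW, hxn⟩⟩
  -- potential
  set L : EuclideanSpace ℝ (Fin d) → ℝ :=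
    fun y => ‖y‖ ^ 2 + 2 * Function.extend p h 0 y with hLdef
  have hL : ∀ i, L (p i) = ‖p i‖ ^ 2 + 2 * h i := by
    intro i; simp [hLdef, hp.extend_apply]
  -- key a.e. pointwise inequality
  have key : ∀ᵐ x ∂μ, ‖x - T x‖ ^ 2 + L (Th x) ≤ ‖x - Th x‖ ^ 2 + L (T x) := by
    filter_upwards [hae] with x hx
    obtain ⟨i, hxG, hThx⟩ := hx
    obtain ⟨j, hTx⟩ := hTval x
    rw [hThx, hTx, hL i, hL j]
    have hcell : ⟪p i, x⟫ + h i ≤ ⟪p j, x⟫ + h j := hxG.1 j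
    have e1 : ‖x - p i‖ ^ 2 = ‖x‖ ^ 2 - 2 * ⟪x, p i⟫ + ‖p i‖ ^ 2 := norm_sub_sq_real x (p i)
    have e2 : ‖x - p j‖ ^ 2 = ‖x‖ ^ 2 - 2 * ⟪x, p j⟫ + ‖p j‖ ^ 2 := norm_sub_sq_real x (p j)
    have c1 : ⟪x, p i⟫ = ⟪p i, x⟫ := (real_inner_comm x (p i)).symm
    have c2 : ⟪x, p j⟫ = ⟪p j, x⟫ := (real_inner_comm x (p j)).symm
    linarith
  -- integrability basics
  have hμ1 : Integrable (fun x : EuclideanSpace ℝ (Fin d) => ‖x‖) μ := by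
    refine ((integrable_const (1:ℝ)).add hμ2).mono
      continuous_norm.aestronglyMeasurable (Filter.Eventually.of_forall fun x => ?_)
    have h0 : (0:ℝ) ≤ ‖x‖ := norm_nonneg x
    have : ‖x‖ ≤ 1 + ‖x‖ ^ 2 := by nlinarith
    calc ‖‖x‖‖ = ‖x‖ := norm_norm x
      _ ≤ 1 + ‖x‖ ^ 2 := this
      _ ≤ ‖1 + ‖x‖ ^ 2‖ := le_abs_self _
  have hIc : ∀ c : EuclideanSpace ℝ (Fin d), Integrable (fun x => ‖x - c‖ ^ 2) μ := by
    intro c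
    have hrw : (fun x : EuclideanSpace ℝ (Fin d) => ‖x - c‖ ^ 2) =
        fun x => ‖x‖ ^ 2 - 2 * ⟪x, c⟫ + ‖c‖ ^ 2 := funext fun x => norm_sub_sq_real x c
    rw [hrw]
    have hinn : Integrable (fun x : EuclideanSpace ℝ (Fin d) => ⟪x, c⟫) μ := by
      refine (hμ1.const_mul ‖c‖).mono'
        ((continuous_id.inner continuous_const).aestronglyMeasurable)
        (Filter.Eventually.of_forall fun x => ?_)
      calc ‖⟪x, c⟫‖ = |⟪x, c⟫| := rfl
        _ ≤ ‖x‖ * ‖c‖ := abs_real_inner_le_norm x c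
        _ = ‖c‖ * ‖x‖ := mul_comm _ _
    exact (hμ2.sub (hinn.const_mul 2)).add (integrable_const _)
  -- representations via partitions
  have hTrepr : ∀ F : EuclideanSpace ℝ (Fin d) → EuclideanSpace ℝ (Fin d) → ℝ,
      (fun x => F x (T x)) = fun x => ∑ i, (T ⁻¹' {p i}).indicator (fun y => F y (p i)) x := by
    intro F
    funext x
    obtain ⟨i, hi⟩ := hTval x
    rw [Finset.sum_eq_single i]
    · rw [Set.indicator_of_mem (by simpa [Set.mem_preimage] using hi), hi]
    · intro j _ hj
      apply Set.indicator_of_notMem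
      intro hxj
      have hxj' : T x = p j := hxj
      exact hj (hp (hi.symm.trans hxj')).symm
    · simp
  have hThrepr : ∀ F : EuclideanSpace ℝ (Fin d) → EuclideanSpace ℝ (Fin d) → ℝ,
      (fun x => F x (Th x)) =ᵐ[μ] fun x => ∑ i, (G i).indicator (fun y => F y (p i)) x := by
    intro F
    filter_upwards [hae] with x hx
    obtain ⟨i, hxG, hThx⟩ := hx
    rw [Finset.sum_eq_single i]
    · rw [Set.indicator_of_mem hxG, hThx]
    · intro j _ hj
      apply Set.indicator_of_notMem
      intro hxj
      exact hxj.2 (Set.mem_biUnion (Set.mem_compl_singleton_iff.mpr (Ne.symm hj)) hxG.1)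
    · simp
  have hSmeas : ∀ i, MeasurableSet (T ⁻¹' {p i}) := fun i => hTm (measurableSet_singleton _)
  -- integrability of the four pieces
  have intA : Integrable (fun x => ‖x - T x‖ ^ 2) μ := by
    rw [hTrepr (fun x y => ‖x - y‖ ^ 2)]
    exact integrable_finset_sum _ fun i _ => (hIc (p i)).indicator (hSmeas i)
  have intB : Integrable (fun x => ‖x - Th x‖ ^ 2) μ := by
    refine (integrable_finset_sum _ fun i (_ : i ∈ Finset.univ) =>
      (hIc (p i)).indicator (hGmeas i)).congr ?_
    exact (hThrepr (fun x y => ‖x - y‖ ^ 2)).symm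
  have intLT : Integrable (fun x => L (T x)) μ := by
    rw [hTrepr (fun _ y => L y)]
    exact integrable_finset_sum _ fun i _ => (integrable_const _).indicator (hSmeas i)
  have intLTh : Integrable (fun x => L (Th x)) μ := by
    refine (integrable_finset_sum _ fun i (_ : i ∈ Finset.univ) =>
      ((integrable_const (L (p i))).indicator (hGmeas i))).congr ?_
    exact (hThrepr (fun _ y => L y)).symm
  -- integral equalities for the potential
  have hLTint : ∫ x, L (T x) ∂μ = ∑ i, ν i * L (p i) := by
    rw [hTrepr (fun _ y => L y)]
    rw [integral_finset_sum _ fun i _ => (integrable_const _).indicator (hSmeas i)]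
    refine Finset.sum_congr rfl fun i _ => ?_
    rw [integral_indicator_const _ (hSmeas i), measureReal_def, hTmeas i, smul_eq_mul,
      ENNReal.toReal_ofReal (hν i).le]
  have hLThint : ∫ x, L (Th x) ∂μ = ∑ i, ν i * L (p i) := by
    rw [integral_congr_ae (hThrepr (fun _ y => L y))]
    rw [integral_finset_sum _ fun i _ => (integrable_const _).indicator (hGmeas i)]
    refine Finset.sum_congr rfl fun i _ => ?_
    rw [integral_indicator_const _ (hGmeas i), measureReal_def, hGvol i, smul_eq_mul,
      ENNReal.toReal_ofReal (hν i).le]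
  -- conclude
  have hmono : ∫ x, (‖x - T x‖ ^ 2 + L (Th x)) ∂μ ≤ ∫ x, (‖x - Th x‖ ^ 2 + L (T x)) ∂μ :=
    integral_mono_ae (intA.add intLTh) (intB.add intLT) key
  rw [integral_add intA intLTh, integral_add intB intLT] at hmono
  linarith [hLTint, hLThint, hmono]
end

section
/- Maximality characterization: let μ be a finite Borel measure on ℝ^d with finite first moment, p₁, …, pₙ ∈ ℝ^d pairwise distinct, and ν₁, …, νₙ > 0. Suppose h* ∈ ℝⁿ satisfies μ(Wᵢ(h*)) = νᵢ for all i, where Wᵢ(h*) are the farthest power cells, and the pairwise intersections Wᵢ(h*) ∩ Wⱼ(h*), i ≠ j, are μ-null. Then h* is a global maximizer of the semi-discrete dual energy E(h) = ∫ minᵢ (⟪pᵢ, x⟫ + hᵢ) dμ(x) − Σᵢ νᵢ hᵢ over ℝⁿ. -/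
open MeasureTheory Finset
open scoped RealInnerProductSpace

private lemma integrable_inf' {α : Type*} {m : MeasurableSpace α} {μ : Measure α}
    {ι : Type*} (s : Finset ι) (hs : s.Nonempty) (f : ι → α → ℝ)
    (hf : ∀ i ∈ s, Integrable (f i) μ) :
    Integrable (fun x => s.inf' hs fun i => f i x) μ := by
  revert hf
  induction hs using Finset.Nonempty.cons_induction with
  | singleton i =>
    intro hf; simpa using hf i (by simp)
  | cons i s hi hs ih =>
    intro hf
    have : (fun x => (Finset.cons i s hi).inf' (Finset.cons_nonempty hi) fun j => f j x)
        = fun x => min (f i x) (s.inf' hs fun j => f j x) := by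
      funext x; rw [Finset.inf'_cons]
    rw [this]
    exact (hf i (by simp)).inf (ih fun j hj => hf j (Finset.mem_cons_of_mem hj))

private lemma measurable_farCell {d n : ℕ} (p : Fin n → EuclideanSpace ℝ (Fin d))
    (h : Fin n → ℝ) (i : Fin n) : MeasurableSet (farCell p h i) := by
  have : farCell p h i = ⋂ j, {x | ⟪p i, x⟫ + h i ≤ ⟪p j, x⟫ + h j} := by
    ext x; simp [farCell, Set.mem_iInter]
  rw [this]
  exact MeasurableSet.iInter fun j =>
    measurableSet_le (((continuous_const.inner continuous_id).add continuous_const).measurable)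
      (((continuous_const.inner continuous_id).add continuous_const).measurable)

theorem stmt_16 {d n : ℕ} [NeZero n]
    (μ : Measure (EuclideanSpace ℝ (Fin d))) [IsFiniteMeasure μ]
    (hμ1 : Integrable (fun x => ‖x‖) μ)
    (p : Fin n → EuclideanSpace ℝ (Fin d)) (hp : Function.Injective p)
    (ν : Fin n → ℝ) (hν : ∀ i, 0 < ν i)
    (hstar : Fin n → ℝ)
    (hvol : ∀ i, μ (farCell p hstar i) = ENNReal.ofReal (ν i))
    (hnull : ∀ i j, i ≠ j → μ (farCell p hstar i ∩ farCell p hstar j) = 0)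
    (E : (Fin n → ℝ) → ℝ)
    (hE : ∀ h : Fin n → ℝ,
      E h = (∫ x, Finset.univ.inf' Finset.univ_nonempty (fun i => ⟪p i, x⟫ + h i) ∂μ)
              - ∑ i, ν i * h i) :
    ∀ h : Fin n → ℝ, E h ≤ E hstar := by
  intro h
  -- integrability of the affine pieces
  have hint : ∀ (g : Fin n → ℝ) (i : Fin n),
      Integrable (fun x => ⟪p i, x⟫ + g i) μ := by
    intro g i
    refine ((Integrable.mono' (hμ1.const_mul ‖p i‖) ?_ ?_)).add (integrable_const _)
    · exact ((continuous_const.inner continuous_id).aestronglyMeasurable)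
    · filter_upwards with x
      simpa using norm_inner_le_norm (𝕜 := ℝ) (p i) x
  set u : (Fin n → ℝ) → EuclideanSpace ℝ (Fin d) → ℝ := fun g x =>
    Finset.univ.inf' Finset.univ_nonempty (fun i => ⟪p i, x⟫ + g i) with hu
  have hintu : ∀ g, Integrable (u g) μ := fun g =>
    integrable_inf' Finset.univ Finset.univ_nonempty _ (fun i _ => hint g i)
  set W : Fin n → Set (EuclideanSpace ℝ (Fin d)) := farCell p hstar with hW
  have hcover : (⋃ i, W i) = Set.univ := by
    ext x
    simp only [Set.mem_iUnion, Set.mem_univ, iff_true]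
    obtain ⟨i, -, hi⟩ := Finset.exists_mem_eq_inf' (Finset.univ_nonempty (α := Fin n))
      (fun i => ⟪p i, x⟫ + hstar i)
    exact ⟨i, fun j => hi ▸ Finset.inf'_le _ (Finset.mem_univ j)⟩
  have hmeas : ∀ i, MeasurableSet (W i) := measurable_farCell p hstar
  -- key pointwise inequality on each cell
  have hptwise : ∀ i, ∀ x ∈ W i, u h x - u hstar x ≤ h i - hstar i := by
    intro i x hx
    have h1 : u h x ≤ ⟪p i, x⟫ + h i := Finset.inf'_le _ (Finset.mem_univ i)
    have h2 : u hstar x = ⟪p i, x⟫ + hstar i := by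
      refine le_antisymm (Finset.inf'_le _ (Finset.mem_univ i)) ?_
      exact Finset.le_inf' _ _ fun j _ => hx j
    rw [h2]; linarith
  have hdiff : Integrable (fun x => u h x - u hstar x) μ := (hintu h).sub (hintu hstar)
  -- decompose the integral over the a.e. partition
  have hsplit : ∫ x, (u h x - u hstar x) ∂μ
      = ∑ i, ∫ x in W i, (u h x - u hstar x) ∂μ := by
    have := integral_iUnion_ae (μ := μ) (s := W) (f := fun x => u h x - u hstar x)
      (fun i => (hmeas i).nullMeasurableSet)
      (fun i j hij => hnull i j hij)
      (by rw [hcover]; exact hdiff.integrableOn)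
    rw [← tsum_fintype (L := SummationFilter.unconditional _)]
    simpa [hcover] using this
  have hbound : ∀ i, ∫ x in W i, (u h x - u hstar x) ∂μ ≤ ν i * (h i - hstar i) := by
    intro i
    have h1 : ∫ x in W i, (u h x - u hstar x) ∂μ ≤ ∫ _x in W i, (h i - hstar i) ∂μ := by
      refine setIntegral_mono_on hdiff.integrableOn (integrableOn_const (measure_lt_top μ _).ne) (hmeas i)
        (hptwise i)
    have h2 : ∫ _x in W i, (h i - hstar i) ∂μ = ν i * (h i - hstar i) := by
      rw [setIntegral_const, measureReal_def, hvol i, smul_eq_mul,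
        ENNReal.toReal_ofReal (hν i).le]
    linarith
  have hsum : ∫ x, (u h x - u hstar x) ∂μ ≤ ∑ i, ν i * (h i - hstar i) := by
    rw [hsplit]; exact Finset.sum_le_sum fun i _ => hbound i
  rw [hE h, hE hstar]
  have hint_eq : ∫ x, (u h x - u hstar x) ∂μ
      = (∫ x, u h x ∂μ) - ∫ x, u hstar x ∂μ := integral_sub (hintu h) (hintu hstar)
  have : ∑ i, ν i * (h i - hstar i) = (∑ i, ν i * h i) - ∑ i, ν i * hstar i := by
    rw [← Finset.sum_sub_distrib]; congr 1; ext i; ring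
  simp only [hu] at hsum hint_eq
  linarith [hsum, hint_eq ▸ hsum]
end

section
/- Existence in the semi-discrete worst transportation problem: let Ω ⊆ ℝ^d be a compact convex set with nonempty interior, f : Ω → ℝ a positive continuous function, μ the measure with density f on Ω, and p₁, …, pₙ ∈ ℝ^d pairwise distinct points. Then for any ν₁, …, νₙ > 0 with Σᵢ νᵢ = μ(Ω), there exists h ∈ ℝⁿ such that μ(Wᵢ(h) ∩ Ω) = νᵢ for every i, where Wᵢ(h) is the farthest power cell of index i. -/
open MeasureTheory
open scoped RealInnerProductSpace

/-- The measure with density `f` on `Ω` (with respect to Lebesgue measure). -/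
noncomputable def densMeasure {d : ℕ} (Ω : Set (EuclideanSpace ℝ (Fin d)))
    (f : EuclideanSpace ℝ (Fin d) → ℝ) : Measure (EuclideanSpace ℝ (Fin d)) :=
  (volume.restrict Ω).withDensity fun x => ENNReal.ofReal (f x)

namespace WTP
set_option linter.unusedSectionVars false

variable {d n : ℕ} [Nonempty (Fin n)]

/-- min over j of ⟪p j, x⟫ + h j -/
noncomputable def mfun (p : Fin n → EuclideanSpace ℝ (Fin d)) (h : Fin n → ℝ)
    (x : EuclideanSpace ℝ (Fin d)) : ℝ :=
  Finset.univ.inf' Finset.univ_nonempty fun j => ⟪p j, x⟫ + h j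

lemma mfun_le (p : Fin n → EuclideanSpace ℝ (Fin d)) (h : Fin n → ℝ)
    (x : EuclideanSpace ℝ (Fin d)) (j : Fin n) : mfun p h x ≤ ⟪p j, x⟫ + h j :=
  Finset.inf'_le _ (Finset.mem_univ j)

lemma le_mfun (p : Fin n → EuclideanSpace ℝ (Fin d)) (h : Fin n → ℝ)
    (x : EuclideanSpace ℝ (Fin d)) {c : ℝ} (hc : ∀ j, c ≤ ⟪p j, x⟫ + h j) :
    c ≤ mfun p h x :=
  Finset.le_inf' _ _ fun j _ => hc j

lemma exists_mfun_eq (p : Fin n → EuclideanSpace ℝ (Fin d)) (h : Fin n → ℝ)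
    (x : EuclideanSpace ℝ (Fin d)) : ∃ j, mfun p h x = ⟪p j, x⟫ + h j := by
  obtain ⟨j, -, hj⟩ := Finset.exists_mem_eq_inf' (s := Finset.univ)
    Finset.univ_nonempty (fun j => ⟪p j, x⟫ + h j)
  exact ⟨j, hj⟩

lemma continuous_mfun (p : Fin n → EuclideanSpace ℝ (Fin d)) (h : Fin n → ℝ) :
    Continuous (mfun p h) := by
  apply Continuous.finset_inf'_apply
  intro j _
  exact (continuous_const.inner continuous_id).add continuous_const

lemma mfun_add_const (p : Fin n → EuclideanSpace ℝ (Fin d)) (h : Fin n → ℝ) (c : ℝ)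
    (x : EuclideanSpace ℝ (Fin d)) :
    mfun p (fun j => h j + c) x = mfun p h x + c := by
  apply le_antisymm
  · obtain ⟨j, hj⟩ := exists_mfun_eq p h x
    calc mfun p (fun j => h j + c) x ≤ ⟪p j, x⟫ + (h j + c) := mfun_le p _ x j
    _ = mfun p h x + c := by rw [hj]; ring
  · obtain ⟨j, hj⟩ := exists_mfun_eq p (fun j => h j + c) x
    have := mfun_le p h x j
    calc mfun p h x + c ≤ (⟪p j, x⟫ + h j) + c := by linarith
    _ = mfun p (fun j => h j + c) x := by rw [hj]; ring

lemma isClosed_farCell (p : Fin n → EuclideanSpace ℝ (Fin d)) (h : Fin n → ℝ) (i : Fin n) :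
    IsClosed (farCell p h i) := by
  have : farCell p h i = ⋂ j, {x | ⟪p i, x⟫ + h i ≤ ⟪p j, x⟫ + h j} := by
    ext x; simp [farCell, Set.mem_iInter]
  rw [this]
  exact isClosed_iInter fun j => isClosed_le
    ((continuous_const.inner continuous_id).add continuous_const)
    ((continuous_const.inner continuous_id).add continuous_const)

lemma measurableSet_farCell (p : Fin n → EuclideanSpace ℝ (Fin d)) (h : Fin n → ℝ) (i : Fin n) :
    MeasurableSet (farCell p h i) := (isClosed_farCell p h i).measurableSet

section bounds

variable (p : Fin n → EuclideanSpace ℝ (Fin d)) (h : Fin n → ℝ) (i : Fin n) {t : ℝ}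
  (x : EuclideanSpace ℝ (Fin d))

lemma mfun_update_mono (ht : 0 ≤ t) :
    mfun p h x ≤ mfun p (Function.update h i (h i + t)) x := by
  apply le_mfun
  intro j
  rcases eq_or_ne j i with rfl | hji
  · have := mfun_le p h x j
    simp only [Function.update_self]
    linarith
  · rw [Function.update_of_ne hji]
    exact mfun_le p h x j

lemma mfun_update_le (ht : 0 ≤ t) :
    mfun p (Function.update h i (h i + t)) x
      ≤ mfun p h x + t * (farCell p h i).indicator 1 x := by
  by_cases hx : x ∈ farCell p h i
  · rw [Set.indicator_of_mem hx]
    obtain ⟨j, hj⟩ := exists_mfun_eq p h x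
    have h1 : mfun p (Function.update h i (h i + t)) x ≤ ⟪p j, x⟫ + Function.update h i (h i + t) j :=
      mfun_le p _ x j
    rcases eq_or_ne j i with rfl | hji
    · simp only [Function.update_self] at h1
      simp only [Pi.one_apply, mul_one]
      linarith [hj]
    · rw [Function.update_of_ne hji] at h1
      simp only [Pi.one_apply, mul_one]
      linarith [hj]
  · rw [Set.indicator_of_notMem hx]
    simp only [mul_zero, add_zero]
    obtain ⟨j, hj⟩ := exists_mfun_eq p h x
    have hji : j ≠ i := by
      rintro rfl
      apply hx
      intro k
      rw [← hj]; exact mfun_le p h x k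
    have := mfun_le p (Function.update h i (h i + t)) x j
    rw [Function.update_of_ne hji] at this
    linarith [hj]

lemma mfun_update_ge (ht : 0 ≤ t) :
    mfun p h x + t * (farCell p (Function.update h i (h i + t)) i).indicator 1 x
      ≤ mfun p (Function.update h i (h i + t)) x := by
  set h' := Function.update h i (h i + t) with hh'
  by_cases hx : x ∈ farCell p h' i
  · rw [Set.indicator_of_mem hx]
    simp only [Pi.one_apply, mul_one]
    have h2 : ⟪p i, x⟫ + h' i ≤ mfun p h' x := le_mfun p h' x fun j => hx j
    have h3 : mfun p h x ≤ ⟪p i, x⟫ + h i := mfun_le p h x i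
    have : h' i = h i + t := Function.update_self i (h i + t) h
    linarith
  · rw [Set.indicator_of_notMem hx]
    simp only [mul_zero, add_zero]
    exact mfun_update_mono p h i x ht

end bounds

lemma abs_mfun_sub_le (p : Fin n → EuclideanSpace ℝ (Fin d)) (h h' : Fin n → ℝ)
    (x : EuclideanSpace ℝ (Fin d)) :
    |mfun p h x - mfun p h' x| ≤ dist h h' := by
  have key : ∀ g g' : Fin n → ℝ, mfun p g x - mfun p g' x ≤ dist g g' := by
    intro g g'
    obtain ⟨j, hj⟩ := exists_mfun_eq p g' x
    have h1 : mfun p g x ≤ ⟪p j, x⟫ + g j := mfun_le p g x j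
    have h2 : g j - g' j ≤ dist g g' := by
      calc g j - g' j ≤ |g j - g' j| := le_abs_self _
      _ = dist (g j) (g' j) := (Real.dist_eq _ _).symm
      _ ≤ dist g g' := dist_le_pi_dist g g' j
    linarith [hj]
  rw [abs_sub_le_iff]
  exact ⟨key h h', by rw [dist_comm]; exact key h' h⟩

section meas

variable {Ω : Set (EuclideanSpace ℝ (Fin d))} {f : EuclideanSpace ℝ (Fin d) → ℝ}

lemma densMeasure_apply (hΩ : MeasurableSet Ω) (hfnn : ∀ x ∈ Ω, 0 ≤ f x)
    (hfint : IntegrableOn f Ω volume) {S : Set (EuclideanSpace ℝ (Fin d))}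
    (hS : MeasurableSet S) (hSΩ : S ⊆ Ω) :
    densMeasure Ω f S = ENNReal.ofReal (∫ x in S, f x) := by
  rw [densMeasure, withDensity_apply _ hS, Measure.restrict_restrict hS,
    Set.inter_eq_self_of_subset_left hSΩ]
  rw [← ofReal_integral_eq_lintegral_ofReal (hfint.mono_set hSΩ)]
  exact (ae_restrict_iff' hS).2 (Filter.Eventually.of_forall fun x hx => hfnn x (hSΩ hx))

lemma densMeasure_ne_top (hΩ : MeasurableSet Ω) (hfnn : ∀ x ∈ Ω, 0 ≤ f x)
    (hfint : IntegrableOn f Ω volume) {S : Set (EuclideanSpace ℝ (Fin d))}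
    (hS : MeasurableSet S) (hSΩ : S ⊆ Ω) :
    densMeasure Ω f S ≠ ⊤ := by
  rw [densMeasure_apply hΩ hfnn hfint hS hSΩ]; exact ENNReal.ofReal_ne_top

lemma densMeasure_toReal (hΩ : MeasurableSet Ω) (hfnn : ∀ x ∈ Ω, 0 ≤ f x)
    (hfint : IntegrableOn f Ω volume) {S : Set (EuclideanSpace ℝ (Fin d))}
    (hS : MeasurableSet S) (hSΩ : S ⊆ Ω) :
    (densMeasure Ω f S).toReal = ∫ x in S, f x := by
  rw [densMeasure_apply hΩ hfnn hfint hS hSΩ,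
    ENNReal.toReal_ofReal (setIntegral_nonneg hS fun x hx => hfnn x (hSΩ hx))]

lemma densMeasure_null {S : Set (EuclideanSpace ℝ (Fin d))} (hS : volume S = 0) :
    densMeasure Ω f S = 0 := by
  have h0 : volume.restrict Ω S = 0 :=
    le_antisymm (le_trans (Measure.restrict_apply_le _ _) hS.le) zero_le
  exact (withDensity_absolutelyContinuous _ _) h0

end meas

lemma volume_hyperplane {v : EuclideanSpace ℝ (Fin d)} (hv : v ≠ 0) (c : ℝ) :
    volume {x : EuclideanSpace ℝ (Fin d) | ⟪v, x⟫ = c} = 0 := by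
  set x0 : EuclideanSpace ℝ (Fin d) := (c / ‖v‖ ^ 2) • v with hx0def
  have hnv : ‖v‖ ^ 2 ≠ 0 := pow_ne_zero 2 (norm_ne_zero_iff.mpr hv)
  have hx0 : ⟪v, x0⟫ = c := by
    rw [hx0def, real_inner_smul_right, real_inner_self_eq_norm_sq]
    field_simp
  set W : Submodule ℝ (EuclideanSpace ℝ (Fin d)) :=
    LinearMap.ker ((innerSL ℝ v : EuclideanSpace ℝ (Fin d) →L[ℝ] ℝ) : EuclideanSpace ℝ (Fin d) →ₗ[ℝ] ℝ) with hW
  have hset : {x : EuclideanSpace ℝ (Fin d) | ⟪v, x⟫ = c}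
      = (AffineSubspace.mk' x0 W : Set (EuclideanSpace ℝ (Fin d))) := by
    ext x
    simp only [Set.mem_setOf_eq, SetLike.mem_coe, AffineSubspace.mem_mk',
      vsub_eq_sub, hW, LinearMap.mem_ker, ContinuousLinearMap.coe_coe, innerSL_apply_apply,
      inner_sub_right]
    constructor
    · intro hx; rw [hx, hx0]; ring
    · intro hx; have : ⟪v, x⟫ = ⟪v, x0⟫ := by linarith
      rw [this, hx0]
  rw [hset]
  apply Measure.addHaar_affineSubspace
  intro htop
  have hmem : x0 + v ∈ AffineSubspace.mk' x0 W := by rw [htop]; trivial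
  rw [AffineSubspace.mem_mk'] at hmem
  have : ⟪v, (x0 + v) - x0⟫ = 0 := hmem
  simp only [add_sub_cancel_left] at this
  exact hv (inner_self_eq_zero.mp this)

noncomputable def Fint (p : Fin n → EuclideanSpace ℝ (Fin d)) (Ω : Set (EuclideanSpace ℝ (Fin d)))
    (f : EuclideanSpace ℝ (Fin d) → ℝ) (h : Fin n → ℝ) : ℝ :=
  ∫ x in Ω, mfun p h x * f x

section FintSec

variable (p : Fin n → EuclideanSpace ℝ (Fin d)) {Ω : Set (EuclideanSpace ℝ (Fin d))}
  {f : EuclideanSpace ℝ (Fin d) → ℝ} (hΩc : IsCompact Ω) (hf : ContinuousOn f Ω)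
  (hfnn : ∀ x ∈ Ω, 0 ≤ f x)

include hΩc hf hfnn

lemma integrableOn_mfun_mul (h : Fin n → ℝ) :
    IntegrableOn (fun x => mfun p h x * f x) Ω volume :=
  (((continuous_mfun p h).continuousOn.mul hf)).integrableOn_compact hΩc

lemma Fint_diff_le (h : Fin n → ℝ) (i : Fin n) {t : ℝ} (ht : 0 ≤ t) :
    Fint p Ω f (Function.update h i (h i + t)) - Fint p Ω f h
      ≤ t * (densMeasure Ω f (farCell p h i ∩ Ω)).toReal := by
  set h' := Function.update h i (h i + t) with hh'
  have hint1 := integrableOn_mfun_mul p hΩc hf hfnn h'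
  have hint2 := integrableOn_mfun_mul p hΩc hf hfnn h
  have hfint : IntegrableOn f Ω volume := hf.integrableOn_compact hΩc
  have hS : MeasurableSet (farCell p h i) := measurableSet_farCell p h i
  rw [Fint, Fint, ← integral_sub hint1 hint2]
  have hmono : ∀ x ∈ Ω, mfun p h' x * f x - mfun p h x * f x
      ≤ t * (farCell p h i).indicator f x := by
    intro x hx
    have h1 := mfun_update_le p h i x ht
    have h2 := mfun_update_mono p h i x ht
    have hfx := hfnn x hx
    by_cases hxS : x ∈ farCell p h i
    · rw [Set.indicator_of_mem hxS] at h1 ⊢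
      simp only [Pi.one_apply, mul_one] at h1
      nlinarith
    · rw [Set.indicator_of_notMem hxS] at h1 ⊢
      simp only [mul_zero, add_zero] at h1
      nlinarith
  calc (∫ x in Ω, (mfun p h' x * f x - mfun p h x * f x))
      ≤ ∫ x in Ω, t * (farCell p h i).indicator f x :=
        setIntegral_mono_on (hint1.sub hint2) ((hfint.indicator hS).const_mul t)
          hΩc.measurableSet hmono
    _ = t * ∫ x in Ω ∩ farCell p h i, f x := by
        rw [integral_const_mul, setIntegral_indicator hS]
    _ = t * (densMeasure Ω f (farCell p h i ∩ Ω)).toReal := by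
        rw [Set.inter_comm, densMeasure_toReal hΩc.measurableSet hfnn hfint
          (hS.inter hΩc.measurableSet) Set.inter_subset_right]

lemma Fint_diff_ge (h : Fin n → ℝ) (i : Fin n) {t : ℝ} (ht : 0 ≤ t) :
    t * (densMeasure Ω f (farCell p (Function.update h i (h i + t)) i ∩ Ω)).toReal
      ≤ Fint p Ω f (Function.update h i (h i + t)) - Fint p Ω f h := by
  set h' := Function.update h i (h i + t) with hh'
  have hint1 := integrableOn_mfun_mul p hΩc hf hfnn h'
  have hint2 := integrableOn_mfun_mul p hΩc hf hfnn h
  have hfint : IntegrableOn f Ω volume := hf.integrableOn_compact hΩc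
  have hS : MeasurableSet (farCell p h' i) := measurableSet_farCell p h' i
  rw [Fint, Fint, ← integral_sub hint1 hint2]
  have hmono : ∀ x ∈ Ω, t * (farCell p h' i).indicator f x
      ≤ mfun p h' x * f x - mfun p h x * f x := by
    intro x hx
    have h1 := mfun_update_ge p h i x ht
    have hfx := hfnn x hx
    by_cases hxS : x ∈ farCell p h' i
    · rw [Set.indicator_of_mem hxS] at h1 ⊢
      simp only [Pi.one_apply, mul_one] at h1
      nlinarith
    · rw [Set.indicator_of_notMem hxS] at h1 ⊢
      simp only [mul_zero, add_zero] at h1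
      nlinarith
  calc t * (densMeasure Ω f (farCell p h' i ∩ Ω)).toReal
      = ∫ x in Ω, t * (farCell p h' i).indicator f x := by
        rw [integral_const_mul, setIntegral_indicator hS, Set.inter_comm,
          densMeasure_toReal hΩc.measurableSet hfnn hfint
          (hΩc.measurableSet.inter hS) Set.inter_subset_left]
    _ ≤ ∫ x in Ω, (mfun p h' x * f x - mfun p h x * f x) :=
        setIntegral_mono_on ((hfint.indicator hS).const_mul t) (hint1.sub hint2)
          hΩc.measurableSet hmono

lemma Fint_add_const (h : Fin n → ℝ) (c : ℝ) :
    Fint p Ω f (fun j => h j + c) = Fint p Ω f h + c * (densMeasure Ω f Ω).toReal := by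
  have hfint : IntegrableOn f Ω volume := hf.integrableOn_compact hΩc
  have : (fun x => mfun p (fun j => h j + c) x * f x)
      = fun x => mfun p h x * f x + c * f x := by
    funext x; rw [mfun_add_const]; ring
  simp only [Fint]
  rw [this, integral_add (integrableOn_mfun_mul p hΩc hf hfnn h) (hfint.const_mul c),
    integral_const_mul, densMeasure_toReal hΩc.measurableSet hfnn hfint
      hΩc.measurableSet subset_rfl]

lemma Fint_le_coord (h : Fin n → ℝ) (i : Fin n) :
    Fint p Ω f h ≤ (∫ x in Ω, ⟪p i, x⟫ * f x) + h i * (densMeasure Ω f Ω).toReal := by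
  have hfint : IntegrableOn f Ω volume := hf.integrableOn_compact hΩc
  have hci : Continuous fun x : EuclideanSpace ℝ (Fin d) => ⟪p i, x⟫ :=
    continuous_const.inner continuous_id
  have hinner : IntegrableOn (fun x => (⟪p i, x⟫ + h i) * f x) Ω volume :=
    (((hci.add continuous_const).continuousOn.mul hf)).integrableOn_compact hΩc
  have : Fint p Ω f h ≤ ∫ x in Ω, (⟪p i, x⟫ + h i) * f x := by
    apply setIntegral_mono_on (integrableOn_mfun_mul p hΩc hf hfnn h) hinner hΩc.measurableSet
    intro x hx
    have := mfun_le p h x i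
    nlinarith [hfnn x hx]
  calc Fint p Ω f h ≤ ∫ x in Ω, (⟪p i, x⟫ + h i) * f x := this
    _ = (∫ x in Ω, ⟪p i, x⟫ * f x) + h i * (densMeasure Ω f Ω).toReal := by
        have heq : (fun x => (⟪p i, x⟫ + h i) * f x)
            = fun x => ⟪p i, x⟫ * f x + h i * f x := by funext x; ring
        rw [heq]
        rw [integral_add ((hci.continuousOn.mul hf).integrableOn_compact hΩc : IntegrableOn (fun x => ⟪p i, x⟫ * f x) Ω volume)
            (hfint.const_mul _), integral_const_mul,
          densMeasure_toReal hΩc.measurableSet hfnn hfint hΩc.measurableSet subset_rfl]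

lemma Fint_continuous : Continuous fun h : Fin n → ℝ => Fint p Ω f h := by
  obtain ⟨B, hB⟩ := hΩc.exists_bound_of_continuousOn hf
  have hvol : volume Ω < ⊤ := hΩc.measure_lt_top
  apply LipschitzWith.continuous (K := Real.toNNReal (B * (volume Ω).toReal))
  apply LipschitzWith.of_dist_le_mul
  intro h h'
  rw [Real.dist_eq, Fint, Fint, ← integral_sub (integrableOn_mfun_mul p hΩc hf hfnn h)
    (integrableOn_mfun_mul p hΩc hf hfnn h')]
  have hbound : ∀ x ∈ Ω, ‖mfun p h x * f x - mfun p h' x * f x‖ ≤ dist h h' * B := by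
    intro x hx
    have h1 := abs_mfun_sub_le p h h' x
    have h2 := hB x hx
    have : mfun p h x * f x - mfun p h' x * f x = (mfun p h x - mfun p h' x) * f x := by ring
    rw [this, Real.norm_eq_abs, abs_mul]
    have h3 : |f x| ≤ B := h2
    have h4 : (0:ℝ) ≤ |f x| := abs_nonneg _
    have h5 : (0:ℝ) ≤ dist h h' := dist_nonneg
    nlinarith
  calc ‖∫ x in Ω, (mfun p h x * f x - mfun p h' x * f x)‖
      ≤ dist h h' * B * (volume Ω).toReal :=
        norm_setIntegral_le_of_norm_le_const hvol hbound
    _ ≤ Real.toNNReal (B * (volume Ω).toReal) * dist h h' := by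
        have h6 : B * (volume Ω).toReal ≤ Real.toNNReal (B * (volume Ω).toReal) :=
          Real.le_coe_toNNReal _
        have h5 : (0:ℝ) ≤ dist h h' := dist_nonneg
        nlinarith

end FintSec

section MaxSec

variable (p : Fin n → EuclideanSpace ℝ (Fin d)) {Ω : Set (EuclideanSpace ℝ (Fin d))}
  {f : EuclideanSpace ℝ (Fin d) → ℝ} (hΩc : IsCompact Ω) (hf : ContinuousOn f Ω)
  (hfnn : ∀ x ∈ Ω, 0 ≤ f x) {ν : Fin n → ℝ}

include hΩc hf hfnn

lemma coercive_bound (hν : ∀ i, 0 < ν i) (hmass : ∑ i, ν i = (densMeasure Ω f Ω).toReal)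
    (h : Fin n → ℝ) (hh : ∑ i, ν i * h i = 0) :
    Fint p Ω f h ≤ (Finset.univ.sup' Finset.univ_nonempty
        fun i => ∫ x in Ω, ⟪p i, x⟫ * f x)
      - (Finset.univ.inf' Finset.univ_nonempty ν)
        * (Finset.univ.sup' Finset.univ_nonempty fun i => |h i|) := by
  set M := (densMeasure Ω f Ω).toReal with hM
  set C := Finset.univ.sup' Finset.univ_nonempty
    (fun i => ∫ x in Ω, ⟪p i, x⟫ * f x) with hC
  set νm := Finset.univ.inf' Finset.univ_nonempty ν with hνm
  set S := Finset.univ.sup' Finset.univ_nonempty (fun i => |h i|) with hS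
  have hνm_pos : 0 < νm := by
    obtain ⟨i, -, hi⟩ := Finset.exists_mem_eq_inf' (s := Finset.univ) Finset.univ_nonempty ν
    rw [hνm, hi]; exact hν i
  have hνm_le : ∀ i, νm ≤ ν i := fun i => Finset.inf'_le _ (Finset.mem_univ i)
  have hνm_le_M : νm ≤ M := by
    rw [← hmass]
    obtain ⟨i⟩ := (inferInstance : Nonempty (Fin n))
    calc νm ≤ ν i := hνm_le i
    _ ≤ ∑ j, ν j := Finset.single_le_sum (fun j _ => (hν j).le) (Finset.mem_univ i)
  have hM_pos : 0 < M := lt_of_lt_of_le hνm_pos hνm_le_M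
  obtain ⟨i0, -, hi0⟩ := Finset.exists_mem_eq_inf' (s := Finset.univ)
    Finset.univ_nonempty h
  set m0 := h i0 with hm0
  have hm0_le : ∀ i, m0 ≤ h i := fun i => hi0 ▸ Finset.inf'_le _ (Finset.mem_univ i)
  have hm0_nonpos : m0 ≤ 0 := by
    by_contra hpos
    push_neg at hpos
    have : (0:ℝ) < ∑ i, ν i * h i :=
      Finset.sum_pos (fun i _ => mul_pos (hν i) (lt_of_lt_of_le hpos (hm0_le i)))
        Finset.univ_nonempty
    linarith [hh]
  -- key : νm * S ≤ M * (-m0)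
  have key : νm * S ≤ M * (-m0) := by
    obtain ⟨k, -, hk⟩ := Finset.exists_mem_eq_sup' (s := Finset.univ)
      Finset.univ_nonempty (fun i => |h i|)
    rcases le_or_gt 0 (h k) with hk0 | hk0
    · have hsum : ν k * h k + ∑ j ∈ Finset.univ.erase k, ν j * h j = 0 := by
        rw [Finset.add_sum_erase _ (fun j => ν j * h j) (Finset.mem_univ k)]; exact hh
      have h1 : ∑ j ∈ Finset.univ.erase k, ν j * m0 ≤ ∑ j ∈ Finset.univ.erase k, ν j * h j :=
        Finset.sum_le_sum fun j _ => mul_le_mul_of_nonneg_left (hm0_le j) (hν j).le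
      have h2 : (∑ j ∈ Finset.univ.erase k, ν j) * m0 = ∑ j ∈ Finset.univ.erase k, ν j * m0 :=
        Finset.sum_mul _ _ _
      have h3 : ∑ j ∈ Finset.univ.erase k, ν j ≤ M := by
        rw [← hmass]
        apply Finset.sum_le_sum_of_subset_of_nonneg (Finset.erase_subset _ _)
        exact fun j _ _ => (hν j).le
      have h4 : M * m0 ≤ (∑ j ∈ Finset.univ.erase k, ν j) * m0 :=
        mul_le_mul_of_nonpos_right h3 hm0_nonpos
      have h5 : ν k * h k ≤ M * (-m0) := by nlinarith
      have h6 : νm * S ≤ ν k * h k := by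
        rw [hS, hk, abs_of_nonneg hk0]
        exact mul_le_mul_of_nonneg_right (hνm_le k) hk0
      linarith
    · have hSeq : S = -h k := by rw [hS, hk, abs_of_neg hk0]
      have h1 : S ≤ -m0 := by rw [hSeq]; linarith [hm0_le k]
      have h2 : νm * S ≤ νm * (-m0) := mul_le_mul_of_nonneg_left h1 hνm_pos.le
      have h3 : νm * (-m0) ≤ M * (-m0) :=
        mul_le_mul_of_nonneg_right hνm_le_M (by linarith)
      linarith
  have hcoord := Fint_le_coord p hΩc hf hfnn h i0
  have hCle : (∫ x in Ω, ⟪p i0, x⟫ * f x) ≤ C := by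
    rw [hC]
    exact Finset.le_sup' (fun i => ∫ x in Ω, ⟪p i, x⟫ * f x) (Finset.mem_univ i0)
  have : Fint p Ω f h ≤ C + m0 * M := by
    rw [← hM] at hcoord
    calc Fint p Ω f h ≤ (∫ x in Ω, ⟪p i0, x⟫ * f x) + h i0 * M := hcoord
    _ ≤ C + m0 * M := by rw [← hm0]; linarith
  nlinarith

lemma exists_global_max (hν : ∀ i, 0 < ν i)
    (hmass : ∑ i, ν i = (densMeasure Ω f Ω).toReal) :
    ∃ hstar : Fin n → ℝ, ∀ g : Fin n → ℝ,
      Fint p Ω f g - ∑ i, ν i * g i ≤ Fint p Ω f hstar - ∑ i, ν i * hstar i := by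
  classical
  set M := (densMeasure Ω f Ω).toReal with hM
  set C := Finset.univ.sup' Finset.univ_nonempty
    (fun i => ∫ x in Ω, ⟪p i, x⟫ * f x) with hC
  set νm := Finset.univ.inf' Finset.univ_nonempty ν with hνm
  have hνm_pos : 0 < νm := by
    obtain ⟨i, -, hi⟩ := Finset.exists_mem_eq_inf' (s := Finset.univ) Finset.univ_nonempty ν
    rw [hνm, hi]; exact hν i
  have hM_pos : 0 < M := by
    rw [← hmass]
    exact Finset.sum_pos (fun i _ => hν i) Finset.univ_nonempty
  set R := max ((C - Fint p Ω f 0 + 1)/νm) 0 with hR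
  have hR0 : 0 ≤ R := le_max_right _ _
  set K := (Set.univ.pi fun _ : Fin n => Set.Icc (-R) R)
    ∩ {h : Fin n → ℝ | ∑ i, ν i * h i = 0} with hK
  have hsum_cont : Continuous fun h : Fin n → ℝ => ∑ i, ν i * h i :=
    continuous_finset_sum _ fun i _ => continuous_const.mul (continuous_apply i)
  have hKcomp : IsCompact K := by
    rw [hK]
    exact (isCompact_univ_pi fun i => isCompact_Icc).inter_right
      (isClosed_eq hsum_cont continuous_const)
  have h0K : (0 : Fin n → ℝ) ∈ K := by
    rw [hK]
    refine Set.mem_inter (fun i _ => Set.mem_Icc.mpr ⟨?_, ?_⟩) (by simp)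
    · simp only [Pi.zero_apply]; linarith
    · simp only [Pi.zero_apply]; linarith
  obtain ⟨hstar, hstarK, hmax⟩ := hKcomp.exists_isMaxOn ⟨0, h0K⟩
    (Fint_continuous p hΩc hf hfnn).continuousOn
  have hmaxH : ∀ g : Fin n → ℝ, (∑ i, ν i * g i = 0) → Fint p Ω f g ≤ Fint p Ω f hstar := by
    intro g hg
    by_cases hgK : g ∈ K
    · exact hmax hgK
    · have hSgt : ∃ i, R < |g i| := by
        by_contra hc
        push_neg at hc
        exact hgK (Set.mem_inter
          (fun i _ => Set.mem_Icc.mpr ⟨neg_le_of_abs_le (hc i), le_of_abs_le (hc i)⟩) hg)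
      obtain ⟨i, hi⟩ := hSgt
      have hSbig : R < Finset.univ.sup' Finset.univ_nonempty (fun j => |g j|) :=
        lt_of_lt_of_le hi (Finset.le_sup' (fun j => |g j|) (Finset.mem_univ i))
      have hb := coercive_bound p hΩc hf hfnn hν hmass g hg
      rw [← hC, ← hνm] at hb
      have hR1 : (C - Fint p Ω f 0 + 1)/νm ≤ R := le_max_left _ _
      have hR2 : C - Fint p Ω f 0 + 1 ≤ νm * R := by
        rw [div_le_iff₀ hνm_pos] at hR1; linarith
      have h0le : Fint p Ω f 0 ≤ Fint p Ω f hstar := hmax h0K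
      have : νm * R < νm * Finset.univ.sup' Finset.univ_nonempty (fun j => |g j|) :=
        mul_lt_mul_of_pos_left hSbig hνm_pos
      linarith
  refine ⟨hstar, fun g => ?_⟩
  have hstar0 : ∑ i, ν i * hstar i = 0 := hstarK.2
  set c := (∑ i, ν i * g i) / M with hc
  set g' := fun j => g j - c with hg'
  have hg'0 : ∑ i, ν i * g' i = 0 := by
    simp only [hg', mul_sub, Finset.sum_sub_distrib, ← Finset.sum_mul, hmass, ← hM, hc]
    field_simp
    ring
  have hgg' : Fint p Ω f g = Fint p Ω f g' + c * M := by
    have : g = fun j => g' j + c := by funext j; simp [hg']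
    rw [this, Fint_add_const p hΩc hf hfnn, hM]
  have hcM : c * M = ∑ i, ν i * g i := by
    rw [hc]; field_simp
  rw [hstar0, hgg', hcM]
  have := hmaxH g' hg'0
  linarith

end MaxSec

section SetSec

variable (p : Fin n → EuclideanSpace ℝ (Fin d)) (h : Fin n → ℝ) (i : Fin n)

/-- the open (strict) cell -/
def strictCell : Set (EuclideanSpace ℝ (Fin d)) :=
  {x | ∀ j, j ≠ i → ⟪p i, x⟫ + h i < ⟪p j, x⟫ + h j}

lemma iUnion_cells :
    (⋃ k : ℕ, farCell p (Function.update h i (h i + 1/(k+1))) i) = strictCell p h i := by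
  ext x
  simp only [Set.mem_iUnion, strictCell, Set.mem_setOf_eq]
  constructor
  · rintro ⟨k, hk⟩ j hj
    have hkj := hk j
    rw [Function.update_self, Function.update_of_ne hj] at hkj
    have hpos : (0:ℝ) < 1/((k:ℝ)+1) := by positivity
    linarith
  · intro hx
    rcases Finset.eq_empty_or_nonempty (Finset.univ.erase i) with he | hne
    · refine ⟨0, fun j => ?_⟩
      have hji : j = i := by
        by_contra hji
        exact absurd (Finset.mem_erase.mpr ⟨hji, Finset.mem_univ j⟩) (he ▸ Finset.notMem_empty j)
      subst hji
      exact le_refl _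
    · set δ := (Finset.univ.erase i).inf' hne
        (fun j => (⟪p j, x⟫ + h j) - (⟪p i, x⟫ + h i)) with hδ
      have hδpos : 0 < δ := by
        rw [hδ, Finset.lt_inf'_iff]
        intro j hj
        have := hx j (Finset.mem_erase.mp hj).1
        linarith
      obtain ⟨k, hk⟩ := exists_nat_one_div_lt hδpos
      refine ⟨k, fun j => ?_⟩
      rcases eq_or_ne j i with rfl | hji
      · exact le_refl _
      · rw [Function.update_self, Function.update_of_ne hji]
        have hmem : j ∈ Finset.univ.erase i := Finset.mem_erase.mpr ⟨hji, Finset.mem_univ j⟩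
        have : δ ≤ (⟪p j, x⟫ + h j) - (⟪p i, x⟫ + h i) := Finset.inf'_le _ hmem
        have hk' : 1/((k:ℝ)+1) < δ := hk
        linarith

lemma mono_cells : Monotone fun k : ℕ => farCell p (Function.update h i (h i + 1/(k+1))) i := by
  intro k k' hkk x hx j
  have hxj := hx j
  rcases eq_or_ne j i with rfl | hji
  · exact le_refl _
  · rw [Function.update_self, Function.update_of_ne hji] at hxj ⊢
    have : 1/((k':ℝ)+1) ≤ 1/((k:ℝ)+1) := by
      apply one_div_le_one_div_of_le (by positivity)
      have : (k:ℝ) ≤ (k':ℝ) := Nat.cast_le.mpr hkk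
      linarith
    linarith

lemma iInter_cells :
    (⋂ k : ℕ, farCell p (Function.update h i (h i - 1/(k+1))) i) = farCell p h i := by
  ext x
  simp only [Set.mem_iInter]
  constructor
  · intro hx j
    rcases eq_or_ne j i with rfl | hji
    · exact le_refl _
    · by_contra hcon
      push_neg at hcon
      have hε : 0 < (⟪p i, x⟫ + h i) - (⟪p j, x⟫ + h j) := by linarith
      obtain ⟨k, hk⟩ := exists_nat_one_div_lt hε
      have hxk := hx k j
      rw [Function.update_self, Function.update_of_ne hji] at hxk
      have hk' : 1/((k:ℝ)+1) < (⟪p i, x⟫ + h i) - (⟪p j, x⟫ + h j) := hk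
      linarith
  · intro hx k j
    rcases eq_or_ne j i with rfl | hji
    · exact le_refl _
    · rw [Function.update_self, Function.update_of_ne hji]
      have := hx j
      have hpos : (0:ℝ) < 1/((k:ℝ)+1) := by positivity
      linarith

lemma anti_cells : Antitone fun k : ℕ => farCell p (Function.update h i (h i - 1/(k+1))) i := by
  intro k k' hkk x hx j
  have hxj := hx j
  rcases eq_or_ne j i with rfl | hji
  · exact le_refl _
  · rw [Function.update_self, Function.update_of_ne hji] at hxj ⊢
    have : 1/((k':ℝ)+1) ≤ 1/((k:ℝ)+1) := by
      apply one_div_le_one_div_of_le (by positivity)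
      have : (k:ℝ) ≤ (k':ℝ) := Nat.cast_le.mpr hkk
      linarith
    linarith

lemma farCell_diff_subset (hp : Function.Injective p) :
    farCell p h i ⊆ strictCell p h i
      ∪ ⋃ j : Fin n, ⋃ (_ : j ≠ i), {x | ⟪p j - p i, x⟫ = h i - h j} := by
  intro x hx
  by_cases hxs : x ∈ strictCell p h i
  · exact Or.inl hxs
  · right
    simp only [strictCell, Set.mem_setOf_eq, not_forall] at hxs
    obtain ⟨j, hji, hle⟩ := hxs
    push_neg at hle
    have hge := hx j
    have heq : ⟪p i, x⟫ + h i = ⟪p j, x⟫ + h j := le_antisymm hge hle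
    refine Set.mem_iUnion.mpr ⟨j, Set.mem_iUnion.mpr ⟨hji, ?_⟩⟩
    simp only [Set.mem_setOf_eq, inner_sub_left]
    linarith

lemma densMeasure_boundary_null (hp : Function.Injective p)
    {Ω : Set (EuclideanSpace ℝ (Fin d))} {f : EuclideanSpace ℝ (Fin d) → ℝ} :
    densMeasure Ω f (⋃ j : Fin n, ⋃ (_ : j ≠ i), {x | ⟪p j - p i, x⟫ = h i - h j}) = 0 := by
  refine measure_iUnion_null fun j => measure_iUnion_null fun hji => ?_
  apply densMeasure_null
  exact volume_hyperplane (sub_ne_zero.mpr fun hc => hji (hp hc)) _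

end SetSec

end WTP

theorem stmt_18 {d n : ℕ}
    (Ω : Set (EuclideanSpace ℝ (Fin d)))
    (hΩc : IsCompact Ω) (hΩconv : Convex ℝ Ω) (hΩint : (interior Ω).Nonempty)
    (f : EuclideanSpace ℝ (Fin d) → ℝ)
    (hf : ContinuousOn f Ω) (hfpos : ∀ x ∈ Ω, 0 < f x)
    (p : Fin n → EuclideanSpace ℝ (Fin d)) (hp : Function.Injective p)
    (ν : Fin n → ℝ) (hν : ∀ i, 0 < ν i)
    (hmass : ∑ i, ν i = (densMeasure Ω f Ω).toReal) :
    ∃ h : Fin n → ℝ, ∀ i, densMeasure Ω f (farCell p h i ∩ Ω) = ENNReal.ofReal (ν i) := by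
  rcases Nat.eq_zero_or_pos n with rfl | hn
  · exact ⟨0, fun i => i.elim0⟩
  have : Nonempty (Fin n) := Fin.pos_iff_nonempty.mp hn
  have hfnn : ∀ x ∈ Ω, 0 ≤ f x := fun x hx => (hfpos x hx).le
  have hfint : IntegrableOn f Ω volume := hf.integrableOn_compact hΩc
  obtain ⟨h, hmax⟩ := WTP.exists_global_max p hΩc hf hfnn hν hmass
  refine ⟨h, fun i => ?_⟩
  have hΩm : MeasurableSet Ω := hΩc.measurableSet
  have hfin : ∀ S : Set (EuclideanSpace ℝ (Fin d)), MeasurableSet S →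
      densMeasure Ω f (S ∩ Ω) ≠ ⊤ := fun S hS =>
    WTP.densMeasure_ne_top hΩm hfnn hfint (hS.inter hΩm) Set.inter_subset_right
  -- sum identity under update
  have hsum_upd : ∀ (b : ℝ), ∑ j, ν j * Function.update h i b j
      = (∑ j, ν j * h j) + ν i * (b - h i) := by
    intro b
    have : ∀ j ∈ Finset.univ, ν j * Function.update h i b j
        = ν j * h j + (if j = i then ν i * (b - h i) else 0) := by
      intro j _
      rcases eq_or_ne j i with rfl | hji
      · rw [Function.update_self]; simp; ring
      · rw [Function.update_of_ne hji]; simp [hji]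
    rw [Finset.sum_congr rfl this, Finset.sum_add_distrib, Finset.sum_ite_eq'
      Finset.univ i (fun _ => ν i * (b - h i))]
    simp
  -- Step 1 : upper bounds
  have step1 : ∀ t : ℝ, 0 < t →
      (densMeasure Ω f (farCell p (Function.update h i (h i + t)) i ∩ Ω)).toReal ≤ ν i := by
    intro t ht
    have hb := WTP.Fint_diff_ge p hΩc hf hfnn h i ht.le
    have hm := hmax (Function.update h i (h i + t))
    rw [hsum_upd (h i + t)] at hm
    have hdiff : WTP.Fint p Ω f (Function.update h i (h i + t)) - WTP.Fint p Ω f h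
        ≤ ν i * t := by ring_nf at hm ⊢; linarith
    have := le_trans hb hdiff
    rw [mul_comm (ν i) t] at this
    exact le_of_mul_le_mul_left this ht
  -- Step 2 : lower bounds
  have step2 : ∀ t : ℝ, 0 < t →
      ν i ≤ (densMeasure Ω f (farCell p (Function.update h i (h i - t)) i ∩ Ω)).toReal := by
    intro t ht
    set g := Function.update h i (h i - t) with hg
    have hgu : Function.update g i (g i + t) = h := by
      funext j
      rcases eq_or_ne j i with rfl | hji
      · rw [Function.update_self, hg, Function.update_self]; ring
      · rw [Function.update_of_ne hji, hg, Function.update_of_ne hji]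
    have hb := WTP.Fint_diff_le p hΩc hf hfnn g i ht.le
    rw [hgu] at hb
    have hm := hmax g
    rw [hg, hsum_upd (h i - t)] at hm
    have hdiff : ν i * t ≤ WTP.Fint p Ω f h - WTP.Fint p Ω f g := by
      rw [hg] at *; ring_nf at hm ⊢; linarith
    have := le_trans hdiff hb
    rw [mul_comm (ν i) t] at this
    exact le_of_mul_le_mul_left this ht
  -- Step 3 : strict cell has measure ≤ ofReal (ν i)
  have hcellm : ∀ g : Fin n → ℝ, MeasurableSet (farCell p g i) :=
    fun g => WTP.measurableSet_farCell p g i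
  have step3 : densMeasure Ω f (WTP.strictCell p h i ∩ Ω) ≤ ENNReal.ofReal (ν i) := by
    have hmono : Monotone fun k : ℕ =>
        farCell p (Function.update h i (h i + 1/(k+1))) i ∩ Ω :=
      fun k k' hkk => Set.inter_subset_inter_left Ω (WTP.mono_cells p h i hkk)
    have hUn : (⋃ k : ℕ, farCell p (Function.update h i (h i + 1/(k+1))) i ∩ Ω)
        = WTP.strictCell p h i ∩ Ω := by
      rw [← Set.iUnion_inter, WTP.iUnion_cells p h i]
    rw [← hUn, hmono.measure_iUnion]
    refine iSup_le fun k => ?_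
    have hpos : (0:ℝ) < 1/((k:ℝ)+1) := by positivity
    have h1 := step1 _ hpos
    exact (ENNReal.le_ofReal_iff_toReal_le (hfin _ (hcellm _)) (hν i).le).mpr h1
  -- Step 4 : lower bound for the closed cell
  have step5 : ENNReal.ofReal (ν i) ≤ densMeasure Ω f (farCell p h i ∩ Ω) := by
    have hanti : Antitone fun k : ℕ =>
        farCell p (Function.update h i (h i - 1/(k+1))) i ∩ Ω :=
      fun k k' hkk => Set.inter_subset_inter_left Ω (WTP.anti_cells p h i hkk)
    have hIn : (⋂ k : ℕ, farCell p (Function.update h i (h i - 1/(k+1))) i ∩ Ω)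
        = farCell p h i ∩ Ω := by
      rw [← Set.iInter_inter, WTP.iInter_cells p h i]
    rw [← hIn, hanti.measure_iInter
      (fun k => ((hcellm _).inter hΩm).nullMeasurableSet)
      ⟨0, hfin _ (hcellm _)⟩]
    refine le_iInf fun k => ?_
    have hpos : (0:ℝ) < 1/((k:ℝ)+1) := by positivity
    exact ENNReal.ofReal_le_of_le_toReal (step2 _ hpos)
  -- Step 5 : combine
  refine le_antisymm ?_ step5
  calc densMeasure Ω f (farCell p h i ∩ Ω)
      ≤ densMeasure Ω f ((WTP.strictCell p h i ∩ Ω)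
        ∪ ⋃ j : Fin n, ⋃ (_ : j ≠ i), {x | ⟪p j - p i, x⟫ = h i - h j}) := by
        apply measure_mono
        intro x hx
        rcases WTP.farCell_diff_subset p h i hp hx.1 with hs | hb
        · exact Or.inl ⟨hs, hx.2⟩
        · exact Or.inr hb
    _ ≤ densMeasure Ω f (WTP.strictCell p h i ∩ Ω)
        + densMeasure Ω f (⋃ j : Fin n, ⋃ (_ : j ≠ i), {x | ⟪p j - p i, x⟫ = h i - h j}) :=
        measure_union_le _ _
    _ ≤ ENNReal.ofReal (ν i) + 0 := by
        rw [WTP.densMeasure_boundary_null p h i hp]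
        exact add_le_add step3 (le_refl 0)
    _ = ENNReal.ofReal (ν i) := by rw [add_zero]
end

section
/- Uniqueness up to an additive constant in the semi-discrete worst transportation problem: let Ω ⊆ ℝ^d be a compact convex set with nonempty interior, f : Ω → ℝ a positive continuous function, μ the measure with density f on Ω, p₁, …, pₙ ∈ ℝ^d pairwise distinct points, and ν₁, …, νₙ > 0 with Σᵢ νᵢ = μ(Ω). If h, h' ∈ ℝⁿ both satisfy μ(Wᵢ(h) ∩ Ω) = νᵢ and μ(Wᵢ(h') ∩ Ω) = νᵢ for all i (Wᵢ being the farthest power cells), then there exists a constant c ∈ ℝ with h'ᵢ = hᵢ + c for all i. -/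
open MeasureTheory
open scoped RealInnerProductSpace

section aux
variable {d n : ℕ}

lemma farCell_sub_const (p : Fin n → EuclideanSpace ℝ (Fin d)) (h : Fin n → ℝ) (c : ℝ) :
    farCell p (fun i => h i - c) = farCell p h := by
  funext i; ext x
  simp only [farCell, Set.mem_setOf_eq]
  constructor <;> intro hx j <;> have := hx j <;> linarith

lemma isClosed_farCell (p : Fin n → EuclideanSpace ℝ (Fin d)) (h : Fin n → ℝ) (i : Fin n) :
    IsClosed (farCell p h i) := by
  have heq : farCell p h i
      = ⋂ j, {x : EuclideanSpace ℝ (Fin d) | ⟪p i, x⟫ + h i ≤ ⟪p j, x⟫ + h j} := by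
    ext x; simp [farCell, Set.mem_iInter]
  rw [heq]
  exact isClosed_iInter fun j => isClosed_le
    ((continuous_const.inner continuous_id).add continuous_const)
    ((continuous_const.inner continuous_id).add continuous_const)

lemma convex_farCell (p : Fin n → EuclideanSpace ℝ (Fin d)) (h : Fin n → ℝ) (i : Fin n) :
    Convex ℝ (farCell p h i) := by
  have heq : farCell p h i
      = ⋂ j, {x : EuclideanSpace ℝ (Fin d) | ⟪p i - p j, x⟫ ≤ h j - h i} := by
    ext x
    simp only [farCell, Set.mem_setOf_eq, Set.mem_iInter, inner_sub_left]
    constructor <;> intro hx j <;> have := hx j <;> linarith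
  rw [heq]
  exact convex_iInter fun j => convex_halfSpace_le
    ⟨fun a b => inner_add_right _ _ _, fun r a => real_inner_smul_right _ _ _⟩ _

lemma volume_hyperplane {v : EuclideanSpace ℝ (Fin d)} (hv : v ≠ 0) (r : ℝ) :
    volume {x : EuclideanSpace ℝ (Fin d) | ⟪v, x⟫ = r} = 0 := by
  set K : Submodule ℝ (EuclideanSpace ℝ (Fin d)) := LinearMap.ker ((innerSL ℝ v : EuclideanSpace ℝ (Fin d) →ₗ[ℝ] ℝ)) with hK
  have hvv : ⟪v, v⟫ ≠ 0 := fun h => hv (inner_self_eq_zero.mp h)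
  have hKtop : K ≠ ⊤ := by
    intro htop
    have hmem : v ∈ K := htop ▸ Submodule.mem_top
    exact hvv (by simpa [hK, LinearMap.mem_ker] using hmem)
  have h0 : volume (K : Set (EuclideanSpace ℝ (Fin d))) = 0 :=
    Measure.addHaar_submodule volume K hKtop
  set x₀ : EuclideanSpace ℝ (Fin d) := (r / ⟪v, v⟫) • v with hx₀def
  have hx₀ : ⟪v, x₀⟫ = r := by
    rw [hx₀def, real_inner_smul_right]; exact div_mul_cancel₀ r hvv
  have hset : {x : EuclideanSpace ℝ (Fin d) | ⟪v, x⟫ = r}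
      = (fun x => x + (-x₀)) ⁻¹' (K : Set (EuclideanSpace ℝ (Fin d))) := by
    ext x
    simp only [Set.mem_setOf_eq, Set.mem_preimage, SetLike.mem_coe, hK, LinearMap.mem_ker,
      ContinuousLinearMap.coe_coe, innerSL_apply_apply, inner_add_right, inner_neg_right, hx₀]
    constructor <;> intro hh <;> linarith
  rw [hset, measure_preimage_add_right volume (-x₀) _]
  exact h0

lemma densMeasure_null {Ω : Set (EuclideanSpace ℝ (Fin d))} {f : EuclideanSpace ℝ (Fin d) → ℝ}
    {s : Set (EuclideanSpace ℝ (Fin d))} (hs : volume s = 0) : densMeasure Ω f s = 0 := by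
  have h1 : densMeasure Ω f ≪ volume.restrict Ω := withDensity_absolutelyContinuous _ _
  have h2 : volume.restrict Ω ≪ (volume : Measure (EuclideanSpace ℝ (Fin d))) :=
    Measure.absolutelyContinuous_of_le Measure.restrict_le_self
  exact (h1.trans h2) hs

lemma densMeasure_pos_of_open {Ω : Set (EuclideanSpace ℝ (Fin d))} (hΩm : MeasurableSet Ω)
    {f : EuclideanSpace ℝ (Fin d) → ℝ} (hf : ContinuousOn f Ω) (hfpos : ∀ x ∈ Ω, 0 < f x)
    {U : Set (EuclideanSpace ℝ (Fin d))} (hU : IsOpen U) (hUne : U.Nonempty) (hUΩ : U ⊆ Ω) :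
    densMeasure Ω f U ≠ 0 := by
  intro h0
  rw [densMeasure, withDensity_apply _ hU.measurableSet,
    Measure.restrict_restrict hU.measurableSet, Set.inter_eq_left.mpr hUΩ] at h0
  have haem : AEMeasurable (fun x => ENNReal.ofReal (f x)) (volume.restrict U) := by
    refine ENNReal.measurable_ofReal.comp_aemeasurable ?_
    exact (hf.aemeasurable hΩm).mono_measure (Measure.restrict_mono hUΩ le_rfl)
  rw [lintegral_eq_zero_iff' haem] at h0
  have hnull : volume.restrict U {x | ¬ (ENNReal.ofReal (f x) = 0)} = 0 := by
    simpa [Filter.EventuallyEq, ae_iff] using h0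
  have hsub : U ⊆ {x | ¬ (ENNReal.ofReal (f x) = 0)} := fun x hx => by
    simp only [Set.mem_setOf_eq, ENNReal.ofReal_eq_zero, not_le]
    exact hfpos x (hUΩ hx)
  have : volume.restrict U U = 0 := measure_mono_null hsub hnull
  rw [Measure.restrict_apply' hU.measurableSet, Set.inter_self] at this
  exact (hU.measure_pos volume hUne).ne' this

lemma interior_nonempty_of_vol {W : Set (EuclideanSpace ℝ (Fin d))} (hWconv : Convex ℝ W)
    (hWclosed : IsClosed W) (hvol : volume W ≠ 0) : (interior W).Nonempty := by
  by_contra hint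
  rw [Set.not_nonempty_iff_eq_empty] at hint
  have hfr : frontier W = W := by
    rw [frontier, hWclosed.closure_eq, hint, Set.diff_empty]
  exact hvol (hfr ▸ hWconv.addHaar_frontier volume)

end aux

theorem stmt_19 {d n : ℕ}
    (Ω : Set (EuclideanSpace ℝ (Fin d)))
    (hΩc : IsCompact Ω) (hΩconv : Convex ℝ Ω) (hΩint : (interior Ω).Nonempty)
    (f : EuclideanSpace ℝ (Fin d) → ℝ)
    (hf : ContinuousOn f Ω) (hfpos : ∀ x ∈ Ω, 0 < f x)
    (p : Fin n → EuclideanSpace ℝ (Fin d)) (hp : Function.Injective p)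
    (ν : Fin n → ℝ) (hν : ∀ i, 0 < ν i)
    (hmass : ∑ i, ν i = (densMeasure Ω f Ω).toReal)
    (h h' : Fin n → ℝ)
    (hh : ∀ i, densMeasure Ω f (farCell p h i ∩ Ω) = ENNReal.ofReal (ν i))
    (hh' : ∀ i, densMeasure Ω f (farCell p h' i ∩ Ω) = ENNReal.ofReal (ν i)) :
    ∃ c : ℝ, ∀ i, h' i = h i + c := by
  classical
  rcases isEmpty_or_nonempty (Fin n) with hemp | hne
  · exact ⟨0, fun i => isEmptyElim i⟩
  set c : ℝ := Finset.univ.sup' Finset.univ_nonempty (fun i => h' i - h i) with hc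
  set g : Fin n → ℝ := fun i => h' i - c with hg
  have hgcell : farCell p g = farCell p h' := farCell_sub_const p h' c
  have hgle : ∀ i, g i ≤ h i := fun i => by
    have := Finset.le_sup' (fun i => h' i - h i) (Finset.mem_univ i)
    rw [← hc] at this
    simp only [hg]; linarith
  by_cases hall : ∀ i, h' i - h i = c
  · exact ⟨c, fun i => by have := hall i; linarith⟩
  push_neg at hall
  obtain ⟨j₀, hj₀⟩ := hall
  set S : Finset (Fin n) := Finset.univ.filter (fun i => h' i - h i = c) with hSdef
  have hSne : S.Nonempty := by
    obtain ⟨i, -, hi⟩ := Finset.exists_mem_eq_sup' Finset.univ_nonempty (fun i => h' i - h i)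
    exact ⟨i, by simp [hSdef, ← hi, hc]⟩
  have hScne : Sᶜ.Nonempty := ⟨j₀, by simp [hSdef, hj₀]⟩
  have hgS : ∀ i ∈ S, g i = h i := by
    intro i hi
    simp only [hSdef, Finset.mem_filter, Finset.mem_univ, true_and] at hi
    simp only [hg]; linarith
  have hgSc : ∀ j ∈ Sᶜ, g j < h j := by
    intro j hj
    simp only [Finset.mem_compl, hSdef, Finset.mem_filter, Finset.mem_univ, true_and] at hj
    have h1 : h' j - h j ≤ c := by
      have hle := Finset.le_sup' (fun i => h' i - h i) (Finset.mem_univ j)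
      rw [← hc] at hle; exact hle
    have h2 : h' j - h j < c := lt_of_le_of_ne h1 hj
    simp only [hg]; linarith
  have hΩm : MeasurableSet Ω := hΩc.isClosed.measurableSet
  -- per-cell null difference (for i ∈ S)
  have hdiff : ∀ i ∈ S, densMeasure Ω f ((farCell p h i ∩ Ω) \ (farCell p g i ∩ Ω)) = 0 := by
    intro i hi
    have hsub : farCell p g i ∩ Ω ⊆ farCell p h i ∩ Ω := by
      rintro x ⟨hx, hxΩ⟩
      refine ⟨fun j => ?_, hxΩ⟩
      have h1 := hx j
      have h2 := hgS i hi
      have h3 := hgle j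
      linarith
    have hgmeas : densMeasure Ω f (farCell p g i ∩ Ω) = ENNReal.ofReal (ν i) := by
      rw [hgcell]; exact hh' i
    rw [measure_diff hsub
      (((isClosed_farCell p g i).measurableSet.inter hΩm).nullMeasurableSet)
      (by rw [hgmeas]; exact ENNReal.ofReal_ne_top), hgmeas, hh i, tsub_self]
  -- the comparison function m
  set F : Fin n → EuclideanSpace ℝ (Fin d) → ℝ := fun k x => ⟪p k, x⟫ + h k with hF
  set G : Fin n → EuclideanSpace ℝ (Fin d) → ℝ := fun k x => ⟪p k, x⟫ + g k with hG
  have hFcont : ∀ k, Continuous (F k) := fun k =>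
    (continuous_const.inner continuous_id).add continuous_const
  have hGcont : ∀ k, Continuous (G k) := fun k =>
    (continuous_const.inner continuous_id).add continuous_const
  set m : EuclideanSpace ℝ (Fin d) → ℝ :=
    fun x => S.inf' hSne (fun i => F i x) - Sᶜ.inf' hScne (fun j => F j x) with hm
  have hmcont : Continuous m := by
    refine Continuous.sub ?_ ?_
    · exact continuous_iff_continuousAt.2 fun x =>
        ContinuousAt.finset_inf'_apply hSne (fun i _ => (hFcont i).continuousAt)
    · exact continuous_iff_continuousAt.2 fun x =>
        ContinuousAt.finset_inf'_apply hScne (fun i _ => (hFcont i).continuousAt)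
  -- hyperplane union
  set Z : Set (EuclideanSpace ℝ (Fin d)) :=
    ⋃ (i : Fin n), ⋃ (j : Fin n), ⋃ (_ : i ≠ j), {x | ⟪p i - p j, x⟫ = h j - h i} with hZ
  have hZvol : volume Z = 0 := by
    refine measure_iUnion_null fun i => measure_iUnion_null fun j => measure_iUnion_null fun hij => ?_
    exact volume_hyperplane (sub_ne_zero.2 fun he => hij (hp he)) _
  have hmzero_sub : {x | m x = 0} ⊆ Z := by
    intro x hx
    simp only [Set.mem_setOf_eq, hm] at hx
    obtain ⟨i, hiS, hie⟩ := Finset.exists_mem_eq_inf' hSne (fun i => F i x)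
    obtain ⟨j, hjS, hje⟩ := Finset.exists_mem_eq_inf' hScne (fun j => F j x)
    have hij : i ≠ j := fun he => (Finset.mem_compl.1 hjS) (he ▸ hiS)
    have heq : F i x = F j x := by rw [← hie, ← hje]; linarith
    refine Set.mem_iUnion.2 ⟨i, Set.mem_iUnion.2 ⟨j, Set.mem_iUnion.2 ⟨hij, ?_⟩⟩⟩
    simp only [Set.mem_setOf_eq, inner_sub_left]
    simp only [hF] at heq
    linarith
  have hfrontier : densMeasure Ω f (frontier Ω) = 0 :=
    densMeasure_null (hΩconv.addHaar_frontier volume)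
  have hZμ : densMeasure Ω f Z = 0 := densMeasure_null hZvol
  -- extracting good points in cells
  have hpoint : ∀ i₀ : Fin n, ∃ a ∈ interior Ω, a ∈ farCell p h i₀ ∧ m a ≠ 0 := by
    intro i₀
    have h1 : densMeasure Ω f ((farCell p h i₀ ∩ Ω) \ (Z ∪ frontier Ω)) ≠ 0 := by
      rw [measure_diff_null (measure_union_null hZμ hfrontier), hh i₀]
      exact (ENNReal.ofReal_pos.2 (hν i₀)).ne'
    obtain ⟨a, ha⟩ := nonempty_of_measure_ne_zero h1
    obtain ⟨⟨hacell, haΩ⟩, hanot⟩ := ha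
    have haZ : a ∉ Z := fun hz => hanot (Set.mem_union_left _ hz)
    have hafr : a ∉ frontier Ω := fun hz => hanot (Set.mem_union_right _ hz)
    have haint : a ∈ interior Ω := by
      by_contra hni
      exact hafr ⟨subset_closure haΩ, hni⟩
    exact ⟨a, haint, hacell, fun hz => haZ (hmzero_sub hz)⟩
  -- point with m < 0
  obtain ⟨i₁, hi₁S⟩ := id hSne
  obtain ⟨a, haint, hacell, hamne⟩ := hpoint i₁
  have hma : m a < 0 := by
    refine lt_of_le_of_ne ?_ hamne
    obtain ⟨j, hjS, hje⟩ := Finset.exists_mem_eq_inf' hScne (fun j => F j a)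
    have h1 : S.inf' hSne (fun i => F i a) ≤ F i₁ a := Finset.inf'_le _ hi₁S
    have h2 : F i₁ a ≤ F j a := hacell j
    simp only [hm]; rw [hje]; linarith
  obtain ⟨j₁, hj₁S⟩ := id hScne
  obtain ⟨b, hbint, hbcell, hbmne⟩ := hpoint j₁
  have hmb : 0 < m b := by
    have hle : 0 ≤ m b := by
      obtain ⟨i, hiS, hie⟩ := Finset.exists_mem_eq_inf' hSne (fun i => F i b)
      have h1 : Sᶜ.inf' hScne (fun j => F j b) ≤ F j₁ b := Finset.inf'_le _ hj₁S
      have h2 : F j₁ b ≤ F i b := hbcell i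
      simp only [hm]; rw [hie]; linarith
    exact hle.lt_of_ne (Ne.symm hbmne)
  -- intermediate value theorem on the connected interior
  have hIVT := (hΩconv.interior.isPreconnected).intermediate_value haint hbint
    hmcont.continuousOn
  obtain ⟨x₀, hx₀int, hmx₀⟩ := hIVT ⟨hma.le, hmb.le⟩
  -- minimizers at x₀
  obtain ⟨i, hiS, hieq⟩ := Finset.exists_mem_eq_inf' hSne (fun k => F k x₀)
  obtain ⟨j, hjS, hjeq⟩ := Finset.exists_mem_eq_inf' hScne (fun k => F k x₀)
  have hinfeq : S.inf' hSne (fun k => F k x₀) = Sᶜ.inf' hScne (fun k => F k x₀) := by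
    have : m x₀ = 0 := hmx₀
    simp only [hm] at this; linarith
  have hx₀cell : x₀ ∈ farCell p h i := by
    intro k
    show F i x₀ ≤ F k x₀
    by_cases hk : k ∈ S
    · rw [← hieq]; exact Finset.inf'_le _ hk
    · rw [← hieq, hinfeq]; exact Finset.inf'_le _ (Finset.mem_compl.2 hk)
  -- the strict gap function m2
  set m2 : EuclideanSpace ℝ (Fin d) → ℝ :=
    fun x => S.inf' hSne (fun k => G k x) - G j x with hm2
  have hm2cont : Continuous m2 := by
    refine Continuous.sub ?_ (hGcont j)
    exact continuous_iff_continuousAt.2 fun x =>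
      ContinuousAt.finset_inf'_apply hSne (fun k _ => (hGcont k).continuousAt)
  have hm2x₀ : 0 < m2 x₀ := by
    have hcg : S.inf' hSne (fun k => G k x₀) = S.inf' hSne (fun k => F k x₀) := by
      refine Finset.inf'_congr hSne rfl fun k hk => ?_
      simp only [hG, hF, hgS k hk]
    have hGj : G j x₀ = F j x₀ - (h j - g j) := by simp only [hG, hF]; ring
    have hjlt : g j < h j := hgSc j hjS
    simp only [hm2]
    rw [hcg, hinfeq, hjeq, hGj]
    linarith
  -- a ball around x₀ where m2 > 0, inside interior Ω
  have hopen : IsOpen ({x | 0 < m2 x} ∩ interior Ω) :=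
    (isOpen_lt continuous_const hm2cont).inter isOpen_interior
  obtain ⟨r, hr, hball⟩ := Metric.isOpen_iff.1 hopen x₀ ⟨hm2x₀, hx₀int⟩
  -- interior point of the h-cell of i
  have hvolW : volume (farCell p h i) ≠ 0 := by
    intro h0
    have h1 : densMeasure Ω f (farCell p h i ∩ Ω) = 0 :=
      densMeasure_null (measure_mono_null Set.inter_subset_left h0)
    rw [hh i] at h1
    exact (ENNReal.ofReal_pos.2 (hν i)).ne' h1
  obtain ⟨y, hy⟩ := interior_nonempty_of_vol (convex_farCell p h i) (isClosed_farCell p h i) hvolW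
  set t : ℝ := min (1/2) (r / (2 * (‖y - x₀‖ + 1))) with ht
  have hA0 : (0:ℝ) ≤ ‖y - x₀‖ := norm_nonneg _
  have ht0 : 0 < t := lt_min (by norm_num) (by positivity)
  have ht1 : t ≤ 1/2 := min_le_left _ _
  set z : EuclideanSpace ℝ (Fin d) := t • y + (1 - t) • x₀ with hz
  have hz_int : z ∈ interior (farCell p h i) :=
    (convex_farCell p h i).combo_interior_closure_mem_interior hy
      (subset_closure hx₀cell) ht0 (by linarith) (by ring)
  have hz_ball : z ∈ Metric.ball x₀ r := by
    have hzx : z - x₀ = t • (y - x₀) := by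
      simp only [hz, smul_sub]; module
    rw [Metric.mem_ball, dist_eq_norm, hzx, norm_smul, Real.norm_eq_abs, abs_of_pos ht0]
    have h1 : t ≤ r / (2 * (‖y - x₀‖ + 1)) := min_le_right _ _
    have h2 : t * ‖y - x₀‖ ≤ r / (2 * (‖y - x₀‖ + 1)) * ‖y - x₀‖ :=
      mul_le_mul_of_nonneg_right h1 hA0
    have h3 : r / (2 * (‖y - x₀‖ + 1)) * ‖y - x₀‖ < r := by
      rw [div_mul_eq_mul_div, div_lt_iff₀ (by positivity)]
      nlinarith
    linarith
  -- final contradiction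
  set U : Set (EuclideanSpace ℝ (Fin d)) := interior (farCell p h i) ∩ Metric.ball x₀ r with hU
  have hUopen : IsOpen U := isOpen_interior.inter Metric.isOpen_ball
  have hUne : U.Nonempty := ⟨z, hz_int, hz_ball⟩
  have hUΩ : U ⊆ Ω := fun x hx => interior_subset (hball hx.2).2
  have hμU : densMeasure Ω f U ≠ 0 := densMeasure_pos_of_open hΩm hf hfpos hUopen hUne hUΩ
  exfalso
  refine hμU (measure_mono_null ?_ (hdiff i hiS))
  rintro x ⟨hx1, hx2⟩
  refine ⟨⟨interior_subset hx1, hUΩ ⟨hx1, hx2⟩⟩, ?_⟩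
  rintro ⟨hxg, -⟩
  have h1 : 0 < m2 x := (hball hx2).1
  have h2 : G i x ≤ G j x := hxg j
  have h3 : S.inf' hSne (fun k => G k x) ≤ G i x := Finset.inf'_le _ hiS
  simp only [hm2] at h1
  linarith
end
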